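/- arXiv:1207.3764 — 4 statements merged into one kernel-verified Lean document; each statement's English description precedes it below -/
import Mathlib

section
/- Let X be a complex Hilbert space, A a bounded self-adjoint operator with closed range, B a bounded skew-adjoint operator with ⟨B a, a'⟩ = 0 for all a, a' ∈ ker A, and C a bounded self-adjoint boundedly invertible operator. Define on X × X the operators L(u,v) = (Au, C⁻¹v) and J(u,v) = (v, −u − Bv). Then: (i) J is boundedly invertible with J⁻¹(x,y) = (−Bx − y, x), so that J⁻¹(a₀, 0) = (−B a₀, a₀) for a₀ ∈ ker A; (ii) for every a₀ ∈ ker A and every a₁ ∈ (ker A)^⊥ with A a₁ = −B a₀, the vector w = (a₁, C a₀) satisfies L w = J⁻¹(a₀, 0); and (iii) for all a₀, a₀' ∈ ker A, ⟨w, J⁻¹(a₀', 0)⟩_{X×X} = ⟨C a₀ + B a₁, a₀'⟩. That is, the restriction of L⁻¹ to J⁻¹ ker(L) has matrix representation equal to that of (C − B A⁻¹ B) restricted to ker A. -/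
/-- For the Hamiltonian linearization `L(u,v) = (Au, C⁻¹v)`,
`J(u,v) = (v, −u − Bv)`: (i) `J` is boundedly invertible with
`J⁻¹(x,y) = (−Bx − y, x)`, so `J⁻¹(a₀,0) = (−Ba₀, a₀)`; (ii) if `a₀ ∈ ker A` and
`a₁ ∈ (ker A)^⊥` with `Aa₁ = −Ba₀`, then `w = (a₁, Ca₀)` satisfies `Lw = J⁻¹(a₀,0)`;
(iii) `⟨w, J⁻¹(a₀',0)⟩_{X×X} = ⟨Ca₀ + Ba₁, a₀'⟩`, i.e. `L⁻¹` restricted to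
`J⁻¹ ker L` has the matrix representation of `(C − BA⁻¹B)|_{ker A}`. -/
theorem stmt_5 {X : Type*} [NormedAddCommGroup X] [InnerProductSpace ℂ X] [CompleteSpace X]
    (A B C Cinv : X →L[ℂ] X)
    (hA : IsSelfAdjoint A) (hArange : IsClosed (LinearMap.range (A : X →ₗ[ℂ] X) : Set X))
    (hB : ContinuousLinearMap.adjoint B = -B)
    (hBker : ∀ a ∈ LinearMap.ker (A : X →ₗ[ℂ] X), ∀ a' ∈ LinearMap.ker (A : X →ₗ[ℂ] X), (inner ℂ (B a) a' : ℂ) = 0)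
    (hC : IsSelfAdjoint C) (hC₁ : Cinv ∘L C = 1) (hC₂ : C ∘L Cinv = 1)
    (L J Jinv : X × X →L[ℂ] X × X)
    (hL : ∀ u v : X, L (u, v) = (A u, Cinv v))
    (hJ : ∀ u v : X, J (u, v) = (v, -u - B v))
    (hJinv : ∀ x y : X, Jinv (x, y) = (-(B x) - y, x)) :
    (J ∘L Jinv = 1 ∧ Jinv ∘L J = 1 ∧ ∀ a₀ : X, Jinv (a₀, 0) = (-(B a₀), a₀)) ∧
    (∀ a₀ ∈ LinearMap.ker (A : X →ₗ[ℂ] X), ∀ a₁ ∈ (LinearMap.ker (A : X →ₗ[ℂ] X))ᗮ,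
      A a₁ = -(B a₀) → L (a₁, C a₀) = Jinv (a₀, 0)) ∧
    (∀ a₀ ∈ LinearMap.ker (A : X →ₗ[ℂ] X), ∀ a₀' ∈ LinearMap.ker (A : X →ₗ[ℂ] X), ∀ a₁ ∈ (LinearMap.ker (A : X →ₗ[ℂ] X))ᗮ,
      A a₁ = -(B a₀) →
        (inner ℂ a₁ ((Jinv (a₀', 0)).1) : ℂ) + (inner ℂ (C a₀) ((Jinv (a₀', 0)).2) : ℂ)
          = (inner ℂ (C a₀ + B a₁) a₀' : ℂ)) := by
  refine ⟨⟨?_, ?_, ?_⟩, ?_, ?_⟩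
  · refine ContinuousLinearMap.ext fun x => ?_
    obtain ⟨u, v⟩ := x
    simp [hJinv u v, hJ (-(B u) - v) u]
  · refine ContinuousLinearMap.ext fun x => ?_
    obtain ⟨u, v⟩ := x
    simp [hJ u v, hJinv v (-u - B v)]
    abel
  · intro a₀
    simp [hJinv a₀ 0]
  · intro a₀ ha₀ a₁ _ h
    rw [hL, hJinv, h]
    have : Cinv (C a₀) = a₀ := by
      have := congrArg (fun f => f a₀) hC₁
      simpa using this
    simp [this]
  · intro a₀ _ a₀' _ a₁ _ _
    rw [hJinv]
    have hBa : (inner ℂ a₁ (-(B a₀') - 0) : ℂ) = inner ℂ (B a₁) a₀' := by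
      have h1 : (inner ℂ a₁ ((ContinuousLinearMap.adjoint B) a₀') : ℂ) = inner ℂ (B a₁) a₀' :=
        ContinuousLinearMap.adjoint_inner_right B a₁ a₀'
      rw [hB] at h1
      simpa using h1
    rw [hBa, inner_add_left]
    ring
end

section
/- Let X be a complex Hilbert space, M a bounded self-adjoint operator on X, and D a bounded injective operator on X with dense range. Then the negative index of the congruent operator D* ∘ M ∘ D equals the negative index of M: n(D* M D) = n(M), where both sides are elements of ℕ ∪ {∞}. -/
open Metric Filter
open scoped Topology

lemma neg_perturb {X : Type*} [NormedAddCommGroup X] [InnerProductSpace ℂ X]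
    (M : X →L[ℂ] X) (n : ℕ) (e : Fin n → X)
    (he : ∀ c : Fin n → ℂ, c ≠ 0 → (inner ℂ (∑ i, c i • e i) (M (∑ i, c i • e i)) : ℂ).re < 0)
    {s : Set X} (hs : Dense s) :
    ∃ f : Fin n → X, (∀ i, f i ∈ s) ∧
      ∀ c : Fin n → ℂ, c ≠ 0 →
        (inner ℂ (∑ i, c i • f i) (M (∑ i, c i • f i)) : ℂ).re < 0 := by
  classical
  set Q : (Fin n → X) → (Fin n → ℂ) → ℝ :=
    fun g c => (inner ℂ (∑ i, c i • g i) (M (∑ i, c i • g i)) : ℂ).re with hQ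
  have hQcont : Continuous fun p : (Fin n → X) × EuclideanSpace ℂ (Fin n) => Q p.1 p.2 := by
    have h1 : Continuous fun p : (Fin n → X) × EuclideanSpace ℂ (Fin n) =>
        ∑ i, p.2 i • p.1 i := by
      apply continuous_finset_sum
      intro i _
      exact (by fun_prop : Continuous fun p : (Fin n → X) × EuclideanSpace ℂ (Fin n) => p.2 i).smul
        ((continuous_apply i).comp continuous_fst)
    exact (Complex.continuous_re.comp
      ((continuous_inner (𝕜 := ℂ)).comp (h1.prodMk (M.continuous.comp h1))))
  have key : ∀ᶠ g in 𝓝 e, ∀ c ∈ sphere (0 : EuclideanSpace ℂ (Fin n)) 1, Q g c < 0 := by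
    apply (isCompact_sphere _ _).eventually_forall_of_forall_eventually
    intro c hc
    have hc0 : (c : Fin n → ℂ) ≠ 0 := by
      intro h
      have h' : (c : EuclideanSpace ℂ (Fin n)) = 0 := by simpa using h
      rw [mem_sphere_zero_iff_norm, h'] at hc
      simp at hc
    have hneg : Q e c < 0 := he c hc0
    exact (hQcont.tendsto (e, c)).eventually (gt_mem_nhds hneg)
  obtain ⟨U, hUsub, hUo, heU⟩ := _root_.mem_nhds_iff.mp key
  have hdense : Dense (Set.pi Set.univ fun _ : Fin n => s) :=
    dense_pi Set.univ fun _ _ => hs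
  obtain ⟨f, hfs, hfU⟩ := hdense.exists_mem_open hUo ⟨e, heU⟩
  refine ⟨f, fun i => hfs i (Set.mem_univ i), ?_⟩
  intro c hc0
  have hfall := hUsub hfU
  set cE : EuclideanSpace ℂ (Fin n) := WithLp.toLp 2 c with hcE
  have hcE0 : cE ≠ 0 := by simpa [hcE] using hc0
  have hr : (0:ℝ) < ‖cE‖ := norm_pos_iff.mpr hcE0
  set a : ℂ := (‖cE‖ : ℂ)⁻¹ with ha
  have ha0 : a ≠ 0 := by
    rw [ha]
    simp [hr.ne']
  have hu : Q f (a • cE : EuclideanSpace ℂ (Fin n)) < 0 := by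
    apply hfall
    rw [mem_sphere_zero_iff_norm, norm_smul, ha]
    simp [hr.ne']
  have hsum : ∑ i, (a • cE) i • f i = a • ∑ i, c i • f i := by
    rw [Finset.smul_sum]
    refine Finset.sum_congr rfl fun i _ => ?_
    show (a * c i) • f i = a • c i • f i
    rw [smul_smul]
  have hQe : Q f (a • cE : EuclideanSpace ℂ (Fin n)) = Complex.normSq a * Q f c := by
    have h2 : (inner ℂ (a • ∑ i, c i • f i) (M (a • ∑ i, c i • f i)) : ℂ)
        = (Complex.normSq a : ℂ) * inner ℂ (∑ i, c i • f i) (M (∑ i, c i • f i)) := by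
      rw [map_smul, inner_smul_left, inner_smul_right, ← mul_assoc,
        mul_comm (starRingEnd ℂ a) a, Complex.mul_conj]
    simp only [hQ, hsum, h2, Complex.re_ofReal_mul]
  have hpos : 0 < Complex.normSq a := Complex.normSq_pos.mpr ha0
  rw [hQe] at hu
  by_contra h
  push_neg at h
  nlinarith

/-- The negative index `n(S)` of a bounded operator `S` on a complex inner product
space: the supremum (in `ℕ∞`) of the dimensions of finite-dimensional subspaces on
which the quadratic form `x ↦ ⟨Sx, x⟩` is negative definite. -/
noncomputable def negIndex {X : Type*} [NormedAddCommGroup X] [InnerProductSpace ℂ X]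
    (S : X →L[ℂ] X) : ℕ∞ :=
  sSup ((fun V : Submodule ℂ X => (Module.finrank ℂ V : ℕ∞)) ''
    {V : Submodule ℂ X | FiniteDimensional ℂ V ∧
      ∀ x ∈ V, x ≠ 0 → (inner ℂ x (S x) : ℂ).re < 0})

/-- For `M` bounded self-adjoint and `D` bounded injective with dense
range, the congruence `D* M D` has the same negative index as `M`. -/
theorem stmt_9 {X : Type*} [NormedAddCommGroup X] [InnerProductSpace ℂ X] [CompleteSpace X]
    (M D : X →L[ℂ] X) (hM : IsSelfAdjoint M)
    (hDinj : Function.Injective ⇑D) (hDrange : DenseRange ⇑D) :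
    negIndex ((ContinuousLinearMap.adjoint D) ∘L M ∘L D) = negIndex M := by
  classical
  set S := (ContinuousLinearMap.adjoint D) ∘L M ∘L D with hS
  have hSapp : ∀ x : X, (inner ℂ x (S x) : ℂ) = inner ℂ (D x) (M (D x)) := by
    intro x
    rw [hS]
    simp only [ContinuousLinearMap.comp_apply]
    rw [ContinuousLinearMap.adjoint_inner_right]
  apply le_antisymm
  · -- n(S) ≤ n(M): V ↦ D(V)
    apply sSup_le
    rintro α ⟨V, ⟨hfd, hneg⟩, rfl⟩
    apply le_sSup
    refine ⟨V.map (D : X →ₗ[ℂ] X), ⟨?_, ?_⟩, ?_⟩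
    · exact Module.Finite.map V (D : X →ₗ[ℂ] X)
    · rintro x hx hx0
      obtain ⟨v, hv, rfl⟩ := hx
      have hv0 : v ≠ 0 := by rintro rfl; simp at hx0
      have := hneg v hv hv0
      rwa [hSapp] at this
    · exact congrArg _ ((Submodule.equivMapOfInjective (D : X →ₗ[ℂ] X) hDinj V).finrank_eq).symm
  · -- n(M) ≤ n(S): perturbation
    apply sSup_le
    rintro α ⟨V, ⟨hfd, hneg⟩, rfl⟩
    set n := Module.finrank ℂ V with hn
    let b : Module.Basis (Fin n) ℂ V := Module.finBasis ℂ V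
    set e : Fin n → X := fun i => (b i : X) with hee
    have he : ∀ c : Fin n → ℂ, c ≠ 0 →
        (inner ℂ (∑ i, c i • e i) (M (∑ i, c i • e i)) : ℂ).re < 0 := by
      intro c hc
      have hmem : (∑ i, c i • e i) = ((∑ i, c i • b i : V) : X) := by
        push_cast
        rfl
      have hbne : (∑ i, c i • b i : V) ≠ 0 := by
        intro h
        exact hc (funext fun i => (Fintype.linearIndependent_iff.mp b.linearIndependent c h i))
      have hne : (∑ i, c i • e i) ≠ 0 := by
        rw [hmem]
        exact fun h => hbne (Subtype.coe_injective h)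
      have hin : (∑ i, c i • e i) ∈ V := by
        rw [hmem]; exact ((∑ i, c i • b i : V)).2
      exact hneg _ hin hne
    obtain ⟨f, hfs, hfneg⟩ := neg_perturb M n e he hDrange
    choose x hx using hfs
    have hDx : ∀ c : Fin n → ℂ, D (∑ i, c i • x i) = ∑ i, c i • f i := by
      intro c
      rw [map_sum]
      exact Finset.sum_congr rfl fun i _ => by rw [map_smul, hx i]
    have hxind : LinearIndependent ℂ x := by
      rw [Fintype.linearIndependent_iff]
      intro c hc
      by_contra h
      have hc' : c ≠ 0 := fun h0 => h (fun i => congrFun h0 i)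
      have := hfneg c hc'
      rw [← hDx c, hc, map_zero] at this
      simp at this
    refine le_sSup ⟨Submodule.span ℂ (Set.range x), ⟨?_, ?_⟩, ?_⟩
    · exact FiniteDimensional.span_of_finite ℂ (Set.finite_range x)
    · intro w hw hw0
      obtain ⟨c, rfl⟩ := (Submodule.mem_span_range_iff_exists_fun ℂ).mp hw
      have hc : c ≠ 0 := by rintro rfl; simp at hw0
      have hlt := hfneg c hc
      rw [hSapp, hDx]
      exact hlt
    · have hcard := finrank_span_eq_card hxind
      simp only [Fintype.card_fin] at hcard
      simp only [hcard, hn]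
end

section
/- Let V : ℝ → ℝ be twice continuously differentiable, E ∈ ℝ, and U₋ < U₊ real numbers such that V(U₋) = V(U₊) = E, V(u) < E for all u ∈ (U₋, U₊), V'(U₋) ≠ 0 and V'(U₊) ≠ 0. Then the improper integral L = (1/√2) ∫_{U₋}^{U₊} du/√(E − V(u)) is finite, and there exists a twice continuously differentiable function u : ℝ → ℝ satisfying u''(x) = −V'(u(x)) for all x, the energy relation (1/2)u'(x)² + V(u(x)) = E for all x, with range equal to [U₋, U₊], and u is periodic with period 2L. -/
open MeasureTheory

noncomputable section

open Set Filter Function Real MeasureTheory intervalIntegral Topology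

namespace Stmt12

/-- Derivative extension at an isolated point, local version. -/
lemma hasDerivAt_of_ne {f g : ℝ → ℝ} {x : ℝ}
    (hd : ∀ᶠ y in 𝓝[≠] x, HasDerivAt f (g y) y)
    (hf : ContinuousAt f x) (hg : ContinuousAt g x) : HasDerivAt f (g x) x := by
  obtain ⟨U, hxU, hUo, hU⟩ : ∃ U ∈ 𝓝 x, IsOpen U ∧ ∀ y ∈ U, y ≠ x → HasDerivAt f (g y) y := by
    obtain ⟨t, ht, hto, hxt⟩ := eventually_nhds_iff.1 (eventually_nhdsWithin_iff.1 hd)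
    exact ⟨t, hto.mem_nhds hxt, hto, fun y hy hyx => ht y hy hyx⟩
  have hA : HasDerivWithinAt f (g x) (Ici x) x := by
    apply hasDerivWithinAt_Ici_of_tendsto_deriv (s := U ∩ Ioi x)
    · intro y hy
      exact ((hU y hy.1 (ne_of_gt hy.2)).differentiableAt).differentiableWithinAt
    · exact hf.continuousWithinAt
    · exact Filter.inter_mem (mem_nhdsWithin_of_mem_nhds hxU) self_mem_nhdsWithin
    · refine (hg.tendsto.mono_left nhdsWithin_le_nhds).congr' ?_
      filter_upwards [self_mem_nhdsWithin, mem_nhdsWithin_of_mem_nhds hxU] with y hy hyU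
      exact ((hU y hyU (ne_of_gt hy)).deriv).symm
  have hB : HasDerivWithinAt f (g x) (Iic x) x := by
    apply hasDerivWithinAt_Iic_of_tendsto_deriv (s := U ∩ Iio x)
    · intro y hy
      exact ((hU y hy.1 (ne_of_lt hy.2)).differentiableAt).differentiableWithinAt
    · exact hf.continuousWithinAt
    · exact Filter.inter_mem (mem_nhdsWithin_of_mem_nhds hxU) self_mem_nhdsWithin
    · refine (hg.tendsto.mono_left nhdsWithin_le_nhds).congr' ?_
      filter_upwards [self_mem_nhdsWithin, mem_nhdsWithin_of_mem_nhds hxU] with y hy hyU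
      exact ((hU y hyU (ne_of_lt hy)).deriv).symm
  simpa using hB.union hA

variable (V : ℝ → ℝ) (E Um Up : ℝ)

def G (s : ℝ) : ℝ :=
  if s = Um then -deriv V Um / (Up - Um)
  else if s = Up then deriv V Up / (Up - Um)
  else (E - V s) / ((s - Um) * (Up - s))

variable {V E Um Up}

lemma G_Um : G V E Um Up Um = -deriv V Um / (Up - Um) := if_pos rfl

lemma G_Up (hlt : Um < Up) : G V E Um Up Up = deriv V Up / (Up - Um) := by
  rw [G, if_neg hlt.ne', if_pos rfl]

lemma G_mem {s : ℝ} (hs : s ∈ Ioo Um Up) :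
    G V E Um Up s = (E - V s) / ((s - Um) * (Up - s)) := by
  rw [G, if_neg hs.1.ne', if_neg hs.2.ne]

section signs

variable (hV : ContDiff ℝ 2 V) (hlt : Um < Up) (hVm : V Um = E) (hVp : V Up = E)
  (hVin : ∀ u ∈ Set.Ioo Um Up, V u < E) (hdm : deriv V Um ≠ 0) (hdp : deriv V Up ≠ 0)

include hV hlt hVm hVin hdm in
lemma derivVm_neg : deriv V Um < 0 := by
  have hd : HasDerivAt V (deriv V Um) Um :=
    ((hV.differentiable (by norm_num)) Um).hasDerivAt
  have hs : Tendsto (slope V Um) (𝓝[>] Um) (𝓝 (deriv V Um)) :=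
    (hasDerivAt_iff_tendsto_slope.1 hd).mono_left
      (nhdsWithin_mono _ (fun y hy => ne_of_gt hy))
  have hle : deriv V Um ≤ 0 := by
    refine le_of_tendsto hs ?_
    filter_upwards [Ioo_mem_nhdsGT_of_mem (left_mem_Ico.2 hlt)] with y hy
    rw [slope_def_field, div_eq_mul_inv]
    have h1 : V y - V Um < 0 := by rw [hVm]; linarith [hVin y hy]
    have h2 : (0:ℝ) < (y - Um)⁻¹ := inv_pos.2 (by linarith [hy.1])
    exact mul_nonpos_of_nonpos_of_nonneg h1.le h2.le
  exact lt_of_le_of_ne hle hdm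

include hV hlt hVp hVin hdp in
lemma derivVp_pos : 0 < deriv V Up := by
  have hd : HasDerivAt V (deriv V Up) Up :=
    ((hV.differentiable (by norm_num)) Up).hasDerivAt
  have hs : Tendsto (slope V Up) (𝓝[<] Up) (𝓝 (deriv V Up)) :=
    (hasDerivAt_iff_tendsto_slope.1 hd).mono_left
      (nhdsWithin_mono _ (fun y hy => ne_of_lt hy))
  have hle : 0 ≤ deriv V Up := by
    refine ge_of_tendsto hs ?_
    filter_upwards [Ioo_mem_nhdsLT_of_mem (right_mem_Ioc.2 hlt)] with y hy
    rw [slope_def_field, div_eq_mul_inv]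
    have h1 : V y - V Up < 0 := by rw [hVp]; linarith [hVin y hy]
    have h2 : (y - Up)⁻¹ < 0 := inv_lt_zero.mpr (by linarith [hy.2])
    exact le_of_lt (mul_pos_of_neg_of_neg h1 h2)
  exact lt_of_le_of_ne hle (Ne.symm hdp)

end signs

section Gfacts

variable (hV : ContDiff ℝ 2 V) (hlt : Um < Up) (hVm : V Um = E) (hVp : V Up = E)
  (hVin : ∀ u ∈ Set.Ioo Um Up, V u < E) (hdm : deriv V Um ≠ 0) (hdp : deriv V Up ≠ 0)

include hV hlt hVm hVp hVin hdm hdp in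
lemma G_pos : ∀ s ∈ Icc Um Up, 0 < G V E Um Up s := by
  intro s hs
  rcases eq_or_ne s Um with rfl | hm
  · rw [G_Um]
    have := derivVm_neg hV hlt hVm hVin hdm
    apply div_pos (by linarith) (by linarith)
  rcases eq_or_ne s Up with rfl | hp
  · rw [G_Up hlt]
    have := derivVp_pos hV hlt hVp hVin hdp
    apply div_pos (by linarith) (by linarith)
  have hso : s ∈ Ioo Um Up := ⟨lt_of_le_of_ne hs.1 (Ne.symm hm), lt_of_le_of_ne hs.2 hp⟩
  rw [G_mem hso]
  have h1 : 0 < E - V s := by linarith [hVin s hso]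
  have h2 : (0:ℝ) < (s - Um) * (Up - s) :=
    mul_pos (by linarith [hso.1]) (by linarith [hso.2])
  exact div_pos h1 h2

include hVm hVp in
lemma W_eq : ∀ s ∈ Icc Um Up, E - V s = ((s - Um) * (Up - s)) * G V E Um Up s := by
  intro s hs
  rcases eq_or_ne s Um with rfl | hm
  · simp [hVm]
  rcases eq_or_ne s Up with rfl | hp
  · simp [hVp]
  have hso : s ∈ Ioo Um Up := ⟨lt_of_le_of_ne hs.1 (Ne.symm hm), lt_of_le_of_ne hs.2 hp⟩
  rw [G_mem hso]
  have h2 : (s - Um) * (Up - s) ≠ 0 :=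
    ne_of_gt (mul_pos (by linarith [hso.1]) (by linarith [hso.2]))
  field_simp

include hV hlt hVm hVp in
lemma G_contOn : ContinuousOn (G V E Um Up) (Icc Um Up) := by
  have hVc : Continuous V := hV.continuous
  intro s hs
  rcases eq_or_ne s Um with heq | hm
  · rw [heq]
    -- continuity at Um
    apply continuousWithinAt_diff_self.mp
    have hIcc : Icc Um Up \ {Um} = Ioc Um Up := by
      ext t; simp only [mem_diff, mem_Icc, mem_singleton_iff, mem_Ioc]
      constructor
      · rintro ⟨⟨h1, h2⟩, h3⟩; exact ⟨lt_of_le_of_ne h1 (Ne.symm h3), h2⟩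
      · rintro ⟨h1, h2⟩; exact ⟨⟨h1.le, h2⟩, h1.ne'⟩
    rw [hIcc]
    show Tendsto (G V E Um Up) (𝓝[Ioc Um Up] Um) (𝓝 (G V E Um Up Um))
    have hW : HasDerivAt (fun t => E - V t) (-deriv V Um) Um :=
      (((hV.differentiable (by norm_num)) Um).hasDerivAt).const_sub E
    have h1 : Tendsto (slope (fun t => E - V t) Um) (𝓝[>] Um) (𝓝 (-deriv V Um)) :=
      (hasDerivAt_iff_tendsto_slope.1 hW).mono_left
        (nhdsWithin_mono _ (fun y hy => ne_of_gt hy))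
    have h2 : Tendsto (fun t => (Up - t)⁻¹) (𝓝 Um) (𝓝 (Up - Um)⁻¹) :=
      ((continuous_const.sub continuous_id).tendsto Um).inv₀ (by intro h; simp at h; linarith)
    have h3 : Tendsto (fun t => slope (fun r => E - V r) Um t * (Up - t)⁻¹)
        (𝓝[Ioc Um Up] Um) (𝓝 (-deriv V Um * (Up - Um)⁻¹)) :=
      Tendsto.mul (h1.mono_left (nhdsWithin_mono _ (fun y hy => hy.1)))
        (h2.mono_left nhdsWithin_le_nhds)
    have hval : G V E Um Up Um = -deriv V Um * (Up - Um)⁻¹ := by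
      rw [G_Um, div_eq_mul_inv]
    rw [hval]
    refine h3.congr' ?_
    filter_upwards [self_mem_nhdsWithin,
      eventually_nhdsWithin_of_eventually_nhds (eventually_lt_nhds hlt)] with t ht htUp
    have hto : t ∈ Ioo Um Up := ⟨ht.1, htUp⟩
    rw [G_mem hto, slope_def_field]
    have : E - V Um = 0 := by rw [hVm]; ring
    rw [show E - V t - (E - V Um) = E - V t by rw [this]; ring]
    rw [div_eq_mul_inv, div_eq_mul_inv, mul_inv]
    ring
  rcases eq_or_ne s Up with heq | hp
  · rw [heq]
    -- continuity at Up
    apply continuousWithinAt_diff_self.mp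
    have hIcc : Icc Um Up \ {Up} = Ico Um Up := by
      ext t; simp only [mem_diff, mem_Icc, mem_singleton_iff, mem_Ico]
      constructor
      · rintro ⟨⟨h1, h2⟩, h3⟩; exact ⟨h1, lt_of_le_of_ne h2 h3⟩
      · rintro ⟨h1, h2⟩; exact ⟨⟨h1, h2.le⟩, h2.ne⟩
    rw [hIcc]
    show Tendsto (G V E Um Up) (𝓝[Ico Um Up] Up) (𝓝 (G V E Um Up Up))
    have hW : HasDerivAt (fun t => E - V t) (-deriv V Up) Up :=
      (((hV.differentiable (by norm_num)) Up).hasDerivAt).const_sub E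
    have h1 : Tendsto (slope (fun t => E - V t) Up) (𝓝[<] Up) (𝓝 (-deriv V Up)) :=
      (hasDerivAt_iff_tendsto_slope.1 hW).mono_left
        (nhdsWithin_mono _ (fun y hy => ne_of_lt hy))
    have h2 : Tendsto (fun t => -(t - Um)⁻¹) (𝓝 Up) (𝓝 (-(Up - Um)⁻¹)) :=
      (((continuous_id.sub continuous_const).tendsto Up).inv₀
        (by intro h; simp at h; linarith)).neg
    have h3 : Tendsto (fun t => slope (fun r => E - V r) Up t * -(t - Um)⁻¹)
        (𝓝[Ico Um Up] Up) (𝓝 (-deriv V Up * -(Up - Um)⁻¹)) :=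
      Tendsto.mul (h1.mono_left (nhdsWithin_mono _ (fun y hy => hy.2)))
        (h2.mono_left nhdsWithin_le_nhds)
    have hval : G V E Um Up Up = -deriv V Up * -(Up - Um)⁻¹ := by
      rw [G_Up hlt, div_eq_mul_inv]; ring
    rw [hval]
    refine h3.congr' ?_
    filter_upwards [self_mem_nhdsWithin,
      eventually_nhdsWithin_of_eventually_nhds (eventually_gt_nhds hlt)] with t ht htUm
    have hto : t ∈ Ioo Um Up := ⟨htUm, ht.2⟩
    rw [G_mem hto, slope_def_field]
    have : E - V Up = 0 := by rw [hVp]; ring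
    rw [show E - V t - (E - V Up) = E - V t by rw [this]; ring]
    rw [div_eq_mul_inv, div_eq_mul_inv, mul_inv]
    rw [show t - Up = -(Up - t) by ring, inv_neg]
    ring
  · have hso : s ∈ Ioo Um Up := ⟨lt_of_le_of_ne hs.1 (Ne.symm hm), lt_of_le_of_ne hs.2 hp⟩
    apply ContinuousAt.continuousWithinAt
    have hfor : ContinuousAt (fun t => (E - V t) / ((t - Um) * (Up - t))) s := by
      apply ContinuousAt.div
      · exact (continuous_const.sub hVc).continuousAt
      · fun_prop
      · exact ne_of_gt (mul_pos (by linarith [hso.1]) (by linarith [hso.2]))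
    refine hfor.congr ?_
    filter_upwards [isOpen_Ioo.eventually_mem hso] with t ht
    exact (G_mem ht).symm

end Gfacts

def c (Um Up : ℝ) (η : ℝ) : ℝ := Um + (Up - Um) * Real.sin η ^ 2

def F (V : ℝ → ℝ) (E Um Up : ℝ) (η : ℝ) : ℝ :=
  Real.sqrt (G V E Um Up (c Um Up η) / 2)

lemma c_cont : Continuous (c Um Up) := by unfold c; fun_prop

lemma c_hasDeriv (η : ℝ) :
    HasDerivAt (c Um Up) ((Up - Um) * (2 * Real.sin η * Real.cos η)) η := by
  have h : HasDerivAt (fun t => Real.sin t ^ 2) (2 * Real.sin η * Real.cos η) η := by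
    have := ((Real.hasDerivAt_sin η).fun_pow 2)
    simpa [mul_comm, mul_assoc, mul_left_comm] using this
  rw [show c Um Up = fun t => Um + (Up - Um) * Real.sin t ^ 2 from rfl]
  simpa [c, mul_comm, mul_assoc, mul_left_comm] using (h.const_mul (Up - Um)).const_add Um

section cF

variable (hV : ContDiff ℝ 2 V) (hlt : Um < Up) (hVm : V Um = E) (hVp : V Up = E)
  (hVin : ∀ u ∈ Set.Ioo Um Up, V u < E) (hdm : deriv V Um ≠ 0) (hdp : deriv V Up ≠ 0)

include hlt in
lemma c_mem (η : ℝ) : c Um Up η ∈ Icc Um Up := by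
  have h1 : (0:ℝ) ≤ Real.sin η ^ 2 := sq_nonneg _
  have h2 : Real.sin η ^ 2 ≤ 1 := by
    have := Real.sin_sq_add_cos_sq η
    nlinarith [sq_nonneg (Real.cos η)]
  constructor
  · simp only [c]; nlinarith
  · simp only [c]; nlinarith

include hlt in
lemma c_mem_Ioo {η : ℝ} (h : Real.sin η * Real.cos η ≠ 0) : c Um Up η ∈ Ioo Um Up := by
  have hs : Real.sin η ≠ 0 := fun h' => h (by rw [h']; ring)
  have hc : Real.cos η ≠ 0 := fun h' => h (by rw [h']; ring)
  have h1 : (0:ℝ) < Real.sin η ^ 2 := by positivity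
  have h2 : Real.sin η ^ 2 < 1 := by
    have := Real.sin_sq_add_cos_sq η
    nlinarith [sq_nonneg (Real.cos η), sq_pos_of_ne_zero hc]
  constructor
  · simp only [c]; nlinarith
  · simp only [c]; nlinarith

include hV hlt hVm hVp in
lemma F_cont : Continuous (F V E Um Up) := by
  rw [continuous_iff_continuousAt]
  intro η
  have h1 : ContinuousAt (fun t => G V E Um Up (c Um Up t)) η := by
    have hcw : ContinuousWithinAt (G V E Um Up) (Icc Um Up) (c Um Up η) :=
      G_contOn hV hlt hVm hVp _ (c_mem hlt η)
    have := hcw.tendsto.comp (tendsto_nhdsWithin_iff.mpr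
      ⟨c_cont.continuousAt, Filter.Eventually.of_forall (fun t => c_mem hlt t)⟩)
    exact this
  exact Real.continuous_sqrt.continuousAt.comp (h1.div_const 2)

include hV hlt hVm hVp hVin hdm hdp in
lemma F_pos (η : ℝ) : 0 < F V E Um Up η :=
  Real.sqrt_pos.2 (by
    have := G_pos hV hlt hVm hVp hVin hdm hdp _ (c_mem hlt η)
    linarith)

include hV hlt hVm hVp hVin hdm hdp in
lemma F_sq (η : ℝ) : F V E Um Up η ^ 2 = G V E Um Up (c Um Up η) / 2 :=
  Real.sq_sqrt (by
    have := G_pos hV hlt hVm hVp hVin hdm hdp _ (c_mem hlt η)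
    linarith)

lemma F_per : Function.Periodic (F V E Um Up) π := by
  intro η
  have : c Um Up (η + π) = c Um Up η := by
    simp [c, Real.sin_add_pi]
  rw [F, F, this]

include hlt hVm hVp in
lemma W_c (η : ℝ) : E - V (c Um Up η) =
    ((Up - Um) * (Real.sin η * Real.cos η)) ^ 2 * G V E Um Up (c Um Up η) := by
  have h1 := W_eq hVm hVp (c Um Up η) (c_mem hlt η)
  rw [h1]
  have hcos : Real.cos η ^ 2 = 1 - Real.sin η ^ 2 := Real.cos_sq' η
  have hc : c Um Up η = Um + (Up - Um) * Real.sin η ^ 2 := rfl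
  rw [hc]
  linear_combination (-((Up - Um)^2 * Real.sin η ^ 2 *
    G V E Um Up (Um + (Up - Um) * Real.sin η ^ 2))) * hcos

include hV hlt hVm hVp hVin hdm hdp in
lemma F_bounds : ∃ a b : ℝ, 0 < a ∧ (∀ η, a ≤ F V E Um Up η) ∧ (∀ η, F V E Um Up η ≤ b) := by
  have hFc := F_cont hV hlt hVm hVp
  obtain ⟨ηa, hηa, hmin⟩ := isCompact_Icc.exists_isMinOn (nonempty_Icc.2 Real.pi_pos.le)
    (hFc.continuousOn (s := Icc 0 π))
  obtain ⟨ηb, hηb, hmax⟩ := isCompact_Icc.exists_isMaxOn (nonempty_Icc.2 Real.pi_pos.le)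
    (hFc.continuousOn (s := Icc 0 π))
  refine ⟨F V E Um Up ηa, F V E Um Up ηb, F_pos hV hlt hVm hVp hVin hdm hdp ηa, ?_, ?_⟩
  · intro η
    obtain ⟨y, hy, hfy⟩ := (F_per (V := V) (E := E)).exists_mem_Ico₀ Real.pi_pos η
    rw [hfy]
    exact hmin (Ico_subset_Icc_self hy)
  · intro η
    obtain ⟨y, hy, hfy⟩ := (F_per (V := V) (E := E)).exists_mem_Ico₀ Real.pi_pos η
    rw [hfy]
    exact hmax (Ico_subset_Icc_self hy)

end cF

section inverse

variable {Fc : ℝ → ℝ} {a b : ℝ}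

lemma exists_theta (hFc : Continuous Fc) (ha : 0 < a)
    (hab : ∀ η, a ≤ Fc η ∧ Fc η ≤ b) :
    ∃ θ : ℝ → ℝ, Continuous θ ∧ StrictMono θ ∧ Surjective θ ∧
      (∀ x, HasDerivAt θ (Fc (θ x)) x) ∧
      (∀ x, (∫ η in (0:ℝ)..(θ x), (Fc η)⁻¹) = x) ∧
      (∀ p, Function.Periodic Fc p →
        ∀ x, θ (x + ∫ η in (0:ℝ)..p, (Fc η)⁻¹) = θ x + p) := by
  have hFpos : ∀ η, 0 < Fc η := fun η => lt_of_lt_of_le ha (hab η).1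
  have hb : 0 < b := lt_of_lt_of_le (hFpos 0) (hab 0).2
  set Θ : ℝ → ℝ := fun y => ∫ η in (0:ℝ)..y, (Fc η)⁻¹ with hΘdef
  have hFi : Continuous fun η => (Fc η)⁻¹ := hFc.inv₀ (fun η => (hFpos η).ne')
  have hint : ∀ y z : ℝ, IntervalIntegrable (fun η => (Fc η)⁻¹) volume y z :=
    fun y z => hFi.intervalIntegrable y z
  have hΘd : ∀ y, HasDerivAt Θ (Fc y)⁻¹ y := fun y =>
    intervalIntegral.integral_hasDerivAt_right (hint 0 y)
      (hFi.stronglyMeasurableAtFilter _ _) hFi.continuousAt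
  have hΘdiff : Differentiable ℝ Θ := fun y => (hΘd y).differentiableAt
  have hΘc : Continuous Θ := hΘdiff.continuous
  have hmono : StrictMono Θ := by
    apply strictMono_of_deriv_pos
    intro y
    rw [(hΘd y).deriv]
    exact inv_pos.2 (hFpos y)
  have hgrow : ∀ y : ℝ, 0 ≤ y → y * b⁻¹ ≤ Θ y := by
    intro y hy
    have h1 : ∫ η in (0:ℝ)..y, b⁻¹ ≤ ∫ η in (0:ℝ)..y, (Fc η)⁻¹ := by
      apply intervalIntegral.integral_mono_on hy (intervalIntegrable_const) (hint 0 y)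
      intro η _
      have := (hab η).2
      have := hFpos η
      gcongr
    simpa using h1
  have hgrow' : ∀ y : ℝ, y ≤ 0 → Θ y ≤ y * b⁻¹ := by
    intro y hy
    have h1 : ∫ η in y..(0:ℝ), b⁻¹ ≤ ∫ η in y..(0:ℝ), (Fc η)⁻¹ := by
      apply intervalIntegral.integral_mono_on hy (intervalIntegrable_const) (hint y 0)
      intro η _
      have := (hab η).2
      have := hFpos η
      gcongr
    have h2 : Θ y = -∫ η in y..(0:ℝ), (Fc η)⁻¹ := by
      simp only [hΘdef]
      exact intervalIntegral.integral_symm y 0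
    rw [h2]
    have h3 : (∫ η in y..(0:ℝ), b⁻¹ : ℝ) = -y * b⁻¹ := by
      rw [intervalIntegral.integral_const, smul_eq_mul]; ring
    linarith [h1, h3 ▸ h1]
  have htop : Tendsto Θ atTop atTop := by
    apply tendsto_atTop_mono' atTop ?_ (Tendsto.atTop_mul_const (inv_pos.2 hb) tendsto_id)
    filter_upwards [eventually_ge_atTop (0:ℝ)] with y hy
    exact hgrow y hy
  have hbot : Tendsto Θ atBot atBot := by
    apply tendsto_atBot_mono' atBot ?_ (Tendsto.atBot_mul_const (inv_pos.2 hb) tendsto_id)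
    filter_upwards [eventually_le_atBot (0:ℝ)] with y hy
    exact hgrow' y hy
  have hsurj : Surjective Θ := hΘc.surjective htop hbot
  set e := StrictMono.orderIsoOfSurjective Θ hmono hsurj with he
  refine ⟨fun x => e.symm x, ?_, e.symm.strictMono, e.symm.surjective, ?_, ?_, ?_⟩
  · exact e.symm.continuous
  · intro x
    have hΘθ : ∀ z, Θ (e.symm z) = z := fun z =>
      StrictMono.orderIsoOfSurjective_self_symm_apply Θ hmono hsurj z
    have h := HasDerivAt.of_local_left_inverse
      (e.symm.continuous.continuousAt) (hΘd (e.symm x))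
      (inv_ne_zero (hFpos (e.symm x)).ne') (Filter.Eventually.of_forall hΘθ)
    simpa [inv_inv] using h
  · intro x
    exact StrictMono.orderIsoOfSurjective_self_symm_apply Θ hmono hsurj x
  · intro p hp x
    have hΘθ : ∀ z, Θ (e.symm z) = z := fun z =>
      StrictMono.orderIsoOfSurjective_self_symm_apply Θ hmono hsurj z
    have hθΘ : ∀ y, e.symm (Θ y) = y := fun y =>
      StrictMono.orderIsoOfSurjective_symm_apply_self Θ hmono hsurj y
    have hper : Function.Periodic (fun η => (Fc η)⁻¹) p := fun t => by
      simp only [hp t]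
    have h1 : Θ (e.symm x + p) = x + ∫ η in (0:ℝ)..p, (Fc η)⁻¹ := by
      have hadd := intervalIntegral.integral_add_adjacent_intervals
        (hint 0 (e.symm x)) (hint (e.symm x) (e.symm x + p))
      have hper' : (∫ η in (e.symm x)..(e.symm x + p), (Fc η)⁻¹)
          = ∫ η in (0:ℝ)..p, (Fc η)⁻¹ := by
        have := hper.intervalIntegral_add_eq (e.symm x) 0
        simpa using this
      calc Θ (e.symm x + p)
          = (∫ η in (0:ℝ)..(e.symm x), (Fc η)⁻¹)
            + ∫ η in (e.symm x)..(e.symm x + p), (Fc η)⁻¹ := hadd.symm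
        _ = x + ∫ η in (0:ℝ)..p, (Fc η)⁻¹ := by
            rw [show (∫ η in (0:ℝ)..(e.symm x), (Fc η)⁻¹) = x from hΘθ x, hper']
    calc e.symm (x + ∫ η in (0:ℝ)..p, (Fc η)⁻¹)
        = e.symm (Θ (e.symm x + p)) := by rw [h1]
      _ = e.symm x + p := hθΘ _

end inverse

section integrable

variable (hV : ContDiff ℝ 2 V) (hlt : Um < Up) (hVm : V Um = E) (hVp : V Up = E)
  (hVin : ∀ u ∈ Set.Ioo Um Up, V u < E) (hdm : deriv V Um ≠ 0) (hdp : deriv V Up ≠ 0)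

include hV hlt hVm hVp hVin hdm hdp in
lemma integrand_integrable :
    IntervalIntegrable (fun s => 1 / Real.sqrt (E - V s)) volume Um Up := by
  obtain ⟨s0, hs0mem, hs0min⟩ := isCompact_Icc.exists_isMinOn (nonempty_Icc.2 hlt.le)
    (G_contOn hV hlt hVm hVp)
  set g₀ := G V E Um Up s0 with hg₀
  have hg0pos : 0 < g₀ := G_pos hV hlt hVm hVp hVin hdm hdp s0 hs0mem
  have hGge : ∀ s ∈ Icc Um Up, g₀ ≤ G V E Um Up s := fun s hs => hs0min hs
  have hmeas0 : Measurable (fun s => 1 / Real.sqrt (E - V s)) := by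
    simp only [one_div]
    exact (Real.continuous_sqrt.comp (continuous_const.sub hV.continuous)).measurable.inv
  set m := (Um + Up) / 2 with hm
  have hUm_m : Um < m := by rw [hm]; linarith
  have hm_Up : m < Up := by rw [hm]; linarith
  set κ := g₀ * ((Up - Um) / 2) with hκ
  have hκpos : 0 < κ := by rw [hκ]; exact mul_pos hg0pos (by linarith)
  -- the key pointwise bound
  have key : ∀ s ∈ Ioo Um Up, ∀ d : ℝ, 0 < d → d ≤ (Up - Um) / 2 * (min (s - Um) (Up - s)) / (s - Um) / (Up - s) → True := fun _ _ _ _ _ => trivial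
  have hleft : IntervalIntegrable (fun s => 1 / Real.sqrt (E - V s)) volume Um m := by
    have hMi : IntervalIntegrable (fun s => (Real.sqrt κ)⁻¹ * (s - Um) ^ (-(1/2) : ℝ))
        volume Um m := by
      have h1 : IntervalIntegrable (fun x : ℝ => x ^ (-(1/2) : ℝ)) volume 0 (m - Um) :=
        intervalIntegrable_rpow' (by norm_num)
      have h2 := (h1.comp_sub_right Um).const_mul (Real.sqrt κ)⁻¹
      simpa using h2
    refine hMi.mono_fun (hmeas0.aestronglyMeasurable.restrict) ?_
    filter_upwards [MeasureTheory.ae_restrict_mem measurableSet_uIoc] with s hs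
    rw [Set.uIoc_of_le hUm_m.le] at hs
    have hsIoo : s ∈ Ioo Um Up := ⟨hs.1, lt_of_le_of_lt hs.2 hm_Up⟩
    have hsUm : 0 < s - Um := by linarith [hsIoo.1]
    have hUps : 0 < Up - s := by linarith [hsIoo.2]
    have hWge : κ * (s - Um) ≤ E - V s := by
      rw [W_eq hVm hVp s (Ioo_subset_Icc_self hsIoo)]
      have h3 := hGge s (Ioo_subset_Icc_self hsIoo)
      have h4 : (Up - Um) / 2 ≤ Up - s := by
        have := hs.2; rw [hm] at this; linarith
      calc κ * (s - Um) = (s - Um) * ((Up - Um)/2) * g₀ := by rw [hκ]; ring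
        _ ≤ (s - Um) * (Up - s) * g₀ :=
            mul_le_mul_of_nonneg_right (mul_le_mul_of_nonneg_left h4 hsUm.le) hg0pos.le
        _ ≤ (s - Um) * (Up - s) * G V E Um Up s :=
            mul_le_mul_of_nonneg_left h3 (by positivity)
    have hWpos : 0 < E - V s := lt_of_lt_of_le (by positivity) hWge
    have hsq : Real.sqrt κ * Real.sqrt (s - Um) ≤ Real.sqrt (E - V s) := by
      rw [← Real.sqrt_mul hκpos.le]
      exact Real.sqrt_le_sqrt hWge
    have hsqpos : 0 < Real.sqrt κ * Real.sqrt (s - Um) := by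
      apply mul_pos (Real.sqrt_pos.2 hκpos) (Real.sqrt_pos.2 hsUm)
    rw [Real.norm_eq_abs, Real.norm_eq_abs, abs_of_nonneg (by positivity),
      abs_of_nonneg (by positivity)]
    have h5 : 1 / Real.sqrt (E - V s) ≤ 1 / (Real.sqrt κ * Real.sqrt (s - Um)) := by
      apply one_div_le_one_div_of_le hsqpos hsq
    calc 1 / Real.sqrt (E - V s) ≤ 1 / (Real.sqrt κ * Real.sqrt (s - Um)) := h5
      _ = (Real.sqrt κ)⁻¹ * (s - Um) ^ (-(1/2) : ℝ) := by
          rw [Real.rpow_neg hsUm.le, ← Real.sqrt_eq_rpow]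
          rw [one_div, mul_inv]
  have hright : IntervalIntegrable (fun s => 1 / Real.sqrt (E - V s)) volume m Up := by
    have hMi : IntervalIntegrable (fun s => (Real.sqrt κ)⁻¹ * (Up - s) ^ (-(1/2) : ℝ))
        volume m Up := by
      have h1 : IntervalIntegrable (fun x : ℝ => x ^ (-(1/2) : ℝ)) volume (Up - m) 0 :=
        intervalIntegrable_rpow' (by norm_num)
      have h2 := (h1.comp_sub_left Up).const_mul (Real.sqrt κ)⁻¹
      simpa using h2
    refine hMi.mono_fun (hmeas0.aestronglyMeasurable.restrict) ?_
    filter_upwards [MeasureTheory.ae_restrict_mem measurableSet_uIoc] with s hs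
    rw [Set.uIoc_of_le hm_Up.le] at hs
    rcases eq_or_lt_of_le hs.2 with heq | hsup
    · rw [heq]
      have h0 : E - V Up = 0 := by rw [hVp]; ring
      simp only [h0, Real.sqrt_zero, div_zero, norm_zero]
      exact norm_nonneg _
    have hsIoo : s ∈ Ioo Um Up := ⟨lt_trans hUm_m hs.1, hsup⟩
    have hsUp : 0 < Up - s := by linarith [hsIoo.2]
    have hsUm2 : 0 < s - Um := by linarith [hsIoo.1]
    have hWge : κ * (Up - s) ≤ E - V s := by
      rw [W_eq hVm hVp s (Ioo_subset_Icc_self hsIoo)]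
      have h3 := hGge s (Ioo_subset_Icc_self hsIoo)
      have h4 : (Up - Um) / 2 ≤ s - Um := by
        have := hs.1; rw [hm] at this; linarith
      calc κ * (Up - s) = (Up - s) * ((Up - Um)/2) * g₀ := by rw [hκ]; ring
        _ ≤ (Up - s) * (s - Um) * g₀ :=
            mul_le_mul_of_nonneg_right (mul_le_mul_of_nonneg_left h4 hsUp.le) hg0pos.le
        _ ≤ (s - Um) * (Up - s) * G V E Um Up s := by
            rw [show (Up - s) * (s - Um) * g₀ = (s - Um) * (Up - s) * g₀ by ring]
            exact mul_le_mul_of_nonneg_left h3 (by positivity)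
    have hWpos : 0 < E - V s := lt_of_lt_of_le (by positivity) hWge
    have hsq : Real.sqrt κ * Real.sqrt (Up - s) ≤ Real.sqrt (E - V s) := by
      rw [← Real.sqrt_mul hκpos.le]
      exact Real.sqrt_le_sqrt hWge
    have hsqpos : 0 < Real.sqrt κ * Real.sqrt (Up - s) := by
      apply mul_pos (Real.sqrt_pos.2 hκpos) (Real.sqrt_pos.2 hsUp)
    rw [Real.norm_eq_abs, Real.norm_eq_abs, abs_of_nonneg (by positivity),
      abs_of_nonneg (by positivity)]
    have h5 : 1 / Real.sqrt (E - V s) ≤ 1 / (Real.sqrt κ * Real.sqrt (Up - s)) :=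
      one_div_le_one_div_of_le hsqpos hsq
    calc 1 / Real.sqrt (E - V s) ≤ 1 / (Real.sqrt κ * Real.sqrt (Up - s)) := h5
      _ = (Real.sqrt κ)⁻¹ * (Up - s) ^ (-(1/2) : ℝ) := by
          rw [Real.rpow_neg hsUp.le, ← Real.sqrt_eq_rpow]
          rw [one_div, mul_inv]
  exact hleft.trans hright

end integrable

section cov

variable (hV : ContDiff ℝ 2 V) (hlt : Um < Up) (hVm : V Um = E) (hVp : V Up = E)
  (hVin : ∀ u ∈ Set.Ioo Um Up, V u < E) (hdm : deriv V Um ≠ 0) (hdp : deriv V Up ≠ 0)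

include hV hlt hVm hVp hVin hdm hdp in
lemma pointwise_cov {η : ℝ} (hs : 0 < Real.sin η) (hc : 0 < Real.cos η) :
    ((Up - Um) * (2 * Real.sin η * Real.cos η)) * (1 / Real.sqrt (E - V (c Um Up η)))
      = Real.sqrt 2 * (F V E Um Up η)⁻¹ := by
  have hA : 0 < (Up - Um) * (Real.sin η * Real.cos η) := by
    apply mul_pos (by linarith) (mul_pos hs hc)
  have hg : 0 < G V E Um Up (c Um Up η) :=
    G_pos hV hlt hVm hVp hVin hdm hdp _ (c_mem hlt η)
  have hW := W_c hlt hVm hVp (η := η)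
  have hsqrtW : Real.sqrt (E - V (c Um Up η))
      = ((Up - Um) * (Real.sin η * Real.cos η)) * Real.sqrt (G V E Um Up (c Um Up η)) := by
    rw [hW, Real.sqrt_mul (sq_nonneg _), Real.sqrt_sq hA.le]
  have hF : F V E Um Up η = Real.sqrt (G V E Um Up (c Um Up η)) / Real.sqrt 2 := by
    rw [F, Real.sqrt_div hg.le]
  rw [hsqrtW, hF]
  have h2 : Real.sqrt (G V E Um Up (c Um Up η)) ≠ 0 := (Real.sqrt_pos.2 hg).ne'
  have h3 : Real.sqrt 2 ≠ 0 := (Real.sqrt_pos.2 (by norm_num)).ne'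
  have h4 : ((Up - Um) * (Real.sin η * Real.cos η)) ≠ 0 := hA.ne'
  have h6 : Up - Um ≠ 0 := sub_ne_zero.2 hlt.ne'
  field_simp
  ring_nf
  rw [Real.sq_sqrt (by norm_num)]

include hV hlt hVm hVp hVin hdm hdp in
lemma cov : (∫ s in Um..Up, 1 / Real.sqrt (E - V s))
    = Real.sqrt 2 * ∫ η in (0:ℝ)..(π/2), (F V E Um Up η)⁻¹ := by
  set g : ℝ → ℝ := fun s => 1 / Real.sqrt (E - V s) with hgdef
  have hgi : IntervalIntegrable g volume Um Up :=
    integrand_integrable hV hlt hVm hVp hVin hdm hdp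
  have hFc := F_cont hV hlt hVm hVp
  have hFpos := F_pos hV hlt hVm hVp hVin hdm hdp
  have hFi : Continuous fun η => (F V E Um Up η)⁻¹ :=
    hFc.inv₀ (fun η => (hFpos η).ne')
  have hFint : ∀ y z : ℝ, IntervalIntegrable (fun η => (F V E Um Up η)⁻¹) volume y z :=
    fun y z => hFi.intervalIntegrable y z
  -- key equality for small positive δ
  have key : ∀ δ ∈ Ioo (0:ℝ) (π/4),
      Real.sqrt 2 * (∫ η in δ..(π/2 - δ), (F V E Um Up η)⁻¹)
        = ∫ s in (c Um Up δ)..(c Um Up (π/2 - δ)), g s := by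
    intro δ hδ
    have hπ : 0 < π := Real.pi_pos
    have hδb : δ < π/2 - δ := by
      have := hδ.2; linarith [this]
    have huIcc : uIcc δ (π/2 - δ) = Icc δ (π/2 - δ) := uIcc_of_le hδb.le
    have hmempos : ∀ η ∈ Icc δ (π/2 - δ), 0 < Real.sin η ∧ 0 < Real.cos η := by
      intro η hη
      constructor
      · apply Real.sin_pos_of_pos_of_lt_pi (by linarith [hη.1, hδ.1])
        nlinarith [hη.2, hδ.1, hπ]
      · apply Real.cos_pos_of_mem_Ioo
        constructor
        · nlinarith [hη.1, hδ.1, hπ]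
        · nlinarith [hη.2, hδ.1, hπ]
    have himg : c Um Up '' (uIcc δ (π/2 - δ)) ⊆ Ioo Um Up := by
      rintro s ⟨η, hη, rfl⟩
      rw [huIcc] at hη
      obtain ⟨h1, h2⟩ := hmempos η hη
      exact c_mem_Ioo hlt (mul_pos h1 h2).ne'
    have hcov := intervalIntegral.integral_comp_smul_deriv''
      (f := c Um Up) (f' := fun η => (Up - Um) * (2 * Real.sin η * Real.cos η))
      (g := g) (a := δ) (b := (π/2 - δ))
      (c_cont.continuousOn)
      (fun x _ => (c_hasDeriv x).hasDerivWithinAt)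
      (Continuous.continuousOn (by fun_prop))
      ?_
    · rw [← hcov]
      rw [← intervalIntegral.integral_const_mul]
      apply intervalIntegral.integral_congr
      intro η hη
      rw [huIcc] at hη
      obtain ⟨h1, h2⟩ := hmempos η hη
      have := pointwise_cov hV hlt hVm hVp hVin hdm hdp h1 h2
      simp only [smul_eq_mul, Function.comp]
      rw [← this]
    · -- continuity of g on the image
      intro s hs
      have hsIoo : s ∈ Ioo Um Up := himg hs
      apply ContinuousAt.continuousWithinAt
      have hpos : 0 < E - V s := by linarith [hVin s hsIoo]
      rw [hgdef]
      apply ContinuousAt.div continuousAt_const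
      · exact (Real.continuous_sqrt.comp (continuous_const.sub hV.continuous)).continuousAt
      · exact (Real.sqrt_pos.2 hpos).ne'
  -- limit of right side
  have hc0 : c Um Up 0 = Um := by simp [c]
  have hcpi2 : c Um Up (π/2) = Up := by simp [c, Real.sin_pi_div_two]
  set P : ℝ → ℝ := fun x => ∫ s in Um..x, g s with hPdef
  have hPcont : ContinuousOn P (Icc Um Up) := by
    have := intervalIntegral.continuousOn_primitive_interval'
      (μ := volume) (b₁ := Um) (b₂ := Up) (f := g) hgi left_mem_uIcc
    rwa [uIcc_of_le hlt.le] at this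
  have hPc : ∀ ψ : ℝ → ℝ, Continuous ψ → Tendsto (fun δ => P (c Um Up (ψ δ))) (𝓝 0)
      (𝓝 (P (c Um Up (ψ 0)))) := by
    intro ψ hψ
    have h1 : Tendsto (fun δ : ℝ => c Um Up (ψ δ)) (𝓝 0) (𝓝[Icc Um Up] (c Um Up (ψ 0))) := by
      rw [tendsto_nhdsWithin_iff]
      exact ⟨(c_cont.tendsto _).comp (hψ.tendsto 0),
        Filter.Eventually.of_forall (fun δ => c_mem hlt _)⟩
    exact (hPcont _ (c_mem hlt _)).tendsto.comp h1
  have hK : Tendsto (fun δ => ∫ s in (c Um Up δ)..(c Um Up (π/2 - δ)), g s) (𝓝 0)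
      (𝓝 (∫ s in Um..Up, g s)) := by
    have hsub : ∀ y z : ℝ, y ∈ Icc Um Up → z ∈ Icc Um Up → IntervalIntegrable g volume y z := by
      intro y z hy hz
      apply hgi.mono_set
      rw [uIcc_of_le hlt.le]
      intro t ht
      rcases le_total y z with h | h
      · rw [uIcc_of_le h] at ht; exact ⟨le_trans hy.1 ht.1, le_trans ht.2 hz.2⟩
      · rw [uIcc_of_ge h] at ht; exact ⟨le_trans hz.1 ht.1, le_trans ht.2 hy.2⟩
    have heq : ∀ δ : ℝ, (∫ s in (c Um Up δ)..(c Um Up (π/2 - δ)), g s)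
        = P (c Um Up (π/2 - δ)) - P (c Um Up δ) := by
      intro δ
      have h1 := intervalIntegral.integral_add_adjacent_intervals
        (hsub Um (c Um Up δ) (left_mem_Icc.2 hlt.le) (c_mem hlt δ))
        (hsub (c Um Up δ) (c Um Up (π/2 - δ)) (c_mem hlt δ) (c_mem hlt _))
      rw [hPdef]
      simp only []
      linarith [h1]
    simp only [heq]
    have h2 : Tendsto (fun δ => P (c Um Up δ)) (𝓝 0) (𝓝 (P Um)) := by
      have := hPc id continuous_id
      simpa [hc0] using this
    have h3 : Tendsto (fun δ => P (c Um Up (π/2 - δ))) (𝓝 0) (𝓝 (P Up)) := by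
      have := hPc (fun δ => π/2 - δ) (by fun_prop)
      simp only [sub_zero] at this
      rwa [hcpi2] at this
    have hPUm : P Um = 0 := by simp [hPdef]
    have := h3.sub h2
    rw [hPUm, sub_zero] at this
    exact this
  -- limit of left side
  have hJ : Tendsto (fun δ => Real.sqrt 2 * ∫ η in δ..(π/2 - δ), (F V E Um Up η)⁻¹) (𝓝 0)
      (𝓝 (Real.sqrt 2 * ∫ η in (0:ℝ)..(π/2), (F V E Um Up η)⁻¹)) := by
    set Φ : ℝ → ℝ := fun y => ∫ η in (0:ℝ)..y, (F V E Um Up η)⁻¹ with hΦdef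
    have hΦc : Continuous Φ := by
      have : Differentiable ℝ Φ := fun y =>
        (intervalIntegral.integral_hasDerivAt_right (hFint 0 y)
          (hFi.stronglyMeasurableAtFilter _ _) hFi.continuousAt).differentiableAt
      exact this.continuous
    have heq : ∀ δ : ℝ, (∫ η in δ..(π/2 - δ), (F V E Um Up η)⁻¹) = Φ (π/2 - δ) - Φ δ := by
      intro δ
      have h1 := intervalIntegral.integral_add_adjacent_intervals
        (hFint 0 δ) (hFint δ (π/2 - δ))
      rw [hΦdef]
      simp only []
      linarith [h1]
    simp only [heq]
    have h2 : Tendsto (fun δ : ℝ => Φ (π/2 - δ) - Φ δ) (𝓝 0) (𝓝 (Φ (π/2) - Φ 0)) := by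
      apply Tendsto.sub
      · exact (hΦc.tendsto _).comp
          (by have h : Tendsto (fun δ : ℝ => π/2 - δ) (𝓝 0) (𝓝 (π/2 - 0)) :=
                (continuous_const.sub continuous_id).tendsto (0:ℝ)
              rwa [sub_zero] at h)
      · exact hΦc.tendsto 0
    have hΦ0 : Φ 0 = 0 := by simp [hΦdef]
    rw [hΦ0, sub_zero] at h2
    exact tendsto_const_nhds.mul h2
  -- conclude by uniqueness of limits along 𝓝[>] 0
  have hne : (𝓝[>] (0:ℝ)).NeBot := nhdsGT_neBot 0
  have h1 := hJ.mono_left (nhdsWithin_le_nhds (s := Ioi (0:ℝ)))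
  have h2 := hK.mono_left (nhdsWithin_le_nhds (s := Ioi (0:ℝ)))
  have h3 : (fun δ => Real.sqrt 2 * ∫ η in δ..(π/2 - δ), (F V E Um Up η)⁻¹)
      =ᶠ[𝓝[>] (0:ℝ)] (fun δ => ∫ s in (c Um Up δ)..(c Um Up (π/2 - δ)), g s) := by
    filter_upwards [Ioo_mem_nhdsGT_of_mem
      (Set.left_mem_Ico.2 (by positivity : (0:ℝ) < π/4))] with δ hδ
    exact key δ hδ
  exact (tendsto_nhds_unique (h1.congr' h3) h2).symm

end cov

lemma F_reflect (η : ℝ) : F V E Um Up (π - η) = F V E Um Up η := by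
  have : c Um Up (π - η) = c Um Up η := by simp [c, Real.sin_pi_sub]
  rw [F, F, this]

section symm

variable (hV : ContDiff ℝ 2 V) (hlt : Um < Up) (hVm : V Um = E) (hVp : V Up = E)
  (hVin : ∀ u ∈ Set.Ioo Um Up, V u < E) (hdm : deriv V Um ≠ 0) (hdp : deriv V Up ≠ 0)

include hV hlt hVm hVp hVin hdm hdp in
lemma int_F_pi : (∫ η in (0:ℝ)..π, (F V E Um Up η)⁻¹)
    = 2 * ∫ η in (0:ℝ)..(π/2), (F V E Um Up η)⁻¹ := by
  have hFc := F_cont hV hlt hVm hVp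
  have hFpos := F_pos hV hlt hVm hVp hVin hdm hdp
  have hFi : Continuous fun η => (F V E Um Up η)⁻¹ := hFc.inv₀ (fun η => (hFpos η).ne')
  have hFint : ∀ y z : ℝ, IntervalIntegrable (fun η => (F V E Um Up η)⁻¹) volume y z :=
    fun y z => hFi.intervalIntegrable y z
  have hsplit := intervalIntegral.integral_add_adjacent_intervals
    (hFint 0 (π/2)) (hFint (π/2) π)
  have h1 := intervalIntegral.integral_comp_sub_left (a := 0) (b := π/2)
    (fun η => (F V E Um Up η)⁻¹) π
  have h2 : π - π/2 = π/2 := by ring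
  rw [h2, sub_zero] at h1
  have h3 : (∫ x in (0:ℝ)..(π/2), (F V E Um Up (π - x))⁻¹)
      = ∫ x in (0:ℝ)..(π/2), (F V E Um Up x)⁻¹ := by
    apply intervalIntegral.integral_congr
    intro x _
    show (F V E Um Up (π - x))⁻¹ = (F V E Um Up x)⁻¹
    rw [F_reflect]
  rw [h3] at h1
  linarith [hsplit, h1]

end symm

lemma sincos_zero {t : ℝ} (h : Real.sin t * Real.cos t = 0) : ∃ k : ℤ, t = k * (π/2) := by
  rcases mul_eq_zero.1 h with h | h
  · obtain ⟨n, hn⟩ := Real.sin_eq_zero_iff.1 h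
    exact ⟨2*n, by push_cast; linarith [hn]⟩
  · obtain ⟨n, hn⟩ := Real.cos_eq_zero_iff.1 h
    exact ⟨2*n+1, by push_cast; linarith [hn]⟩

section main

variable (hV : ContDiff ℝ 2 V) (hlt : Um < Up) (hVm : V Um = E) (hVp : V Up = E)
  (hVin : ∀ u ∈ Set.Ioo Um Up, V u < E) (hdm : deriv V Um ≠ 0) (hdp : deriv V Up ≠ 0)

include hV hlt hVm hVp hVin hdm hdp in
theorem main :
    IntervalIntegrable (fun s => 1 / Real.sqrt (E - V s)) volume Um Up ∧
    ∃ u : ℝ → ℝ, ContDiff ℝ 2 u ∧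
      (∀ x, deriv (deriv u) x = -(deriv V (u x))) ∧
      (∀ x, (1 / 2) * (deriv u x) ^ 2 + V (u x) = E) ∧
      Set.range u = Set.Icc Um Up ∧
      Function.Periodic u
        (2 * ((1 / Real.sqrt 2) * ∫ s in Um..Up, 1 / Real.sqrt (E - V s))) := by
  refine ⟨integrand_integrable hV hlt hVm hVp hVin hdm hdp, ?_⟩
  obtain ⟨a, b, ha, hab1, hab2⟩ := F_bounds hV hlt hVm hVp hVin hdm hdp
  obtain ⟨θ, hθc, hθsm, hθsurj, hθd, hθint, hθper⟩ :=
    exists_theta (F_cont hV hlt hVm hVp) ha (fun η => ⟨hab1 η, hab2 η⟩)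
  have hFpos := F_pos hV hlt hVm hVp hVin hdm hdp
  have hFc := F_cont hV hlt hVm hVp
  set uu : ℝ → ℝ := fun x => c Um Up (θ x) with huu
  set p : ℝ → ℝ := fun x =>
    ((Up - Um) * (2 * Real.sin (θ x) * Real.cos (θ x))) * F V E Um Up (θ x) with hpdef
  have hup : ∀ x, HasDerivAt uu (p x) x := fun x => (c_hasDeriv (θ x)).comp x (hθd x)
  have hud : deriv uu = p := funext fun x => (hup x).deriv
  have energy : ∀ x, (1/2 : ℝ) * p x ^ 2 + V (uu x) = E := by
    intro x
    have hWc := W_c hlt hVm hVp (η := θ x)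
    have hF2 := F_sq hV hlt hVm hVp hVin hdm hdp (θ x)
    have hkey : p x ^ 2 = 2 * (E - V (uu x)) := by
      simp only [hpdef, huu]
      rw [hWc]
      linear_combination (4 * ((Up - Um) * (Real.sin (θ x) * Real.cos (θ x)))^2) * hF2
    linarith [hkey]
  have hp_cont : Continuous p := by
    rw [hpdef]
    apply Continuous.mul ?_ (hFc.comp hθc)
    apply Continuous.mul continuous_const
    exact ((continuous_const.mul (Real.continuous_sin.comp hθc)).mul
      (Real.continuous_cos.comp hθc))
  have hVderiv_cont : Continuous (deriv V) := hV.continuous_deriv (by norm_num)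
  have hucont : Continuous uu := c_cont.comp hθc
  have hVu : ∀ y, HasDerivAt (fun z => V (uu z)) (deriv V (uu y) * p y) y := fun y =>
    (((hV.differentiable (by norm_num)) (uu y)).hasDerivAt).comp y (hup y)
  have hDder : ∀ x, Real.sin (θ x) * Real.cos (θ x) ≠ 0 →
      HasDerivAt p (-(deriv V (uu x))) x := by
    intro x hx
    have hpx : p x ≠ 0 := by
      simp only [hpdef]
      apply mul_ne_zero (mul_ne_zero (sub_ne_zero.2 hlt.ne') ?_) (hFpos (θ x)).ne'
      intro h
      apply hx
      have : (2:ℝ) ≠ 0 := by norm_num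
      calc Real.sin (θ x) * Real.cos (θ x)
          = (2 * Real.sin (θ x) * Real.cos (θ x)) / 2 := by ring
        _ = 0 := by rw [h]; norm_num
    have hWpos : 0 < E - V (uu x) := by
      have h1 : 0 < p x ^ 2 := sq_pos_of_ne_zero hpx
      have := energy x
      linarith
    set q : ℝ → ℝ := fun y => Real.sqrt (2 * (E - V (uu y))) with hqdef
    have habs : ∀ y, q y = |p y| := by
      intro y
      have h1 : 2 * (E - V (uu y)) = p y ^ 2 := by linarith [energy y]
      simp only [hqdef]
      rw [h1, Real.sqrt_sq_eq_abs]
    have hinner : HasDerivAt (fun y => 2 * (E - V (uu y))) (2 * -(deriv V (uu x) * p x)) x := by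
      have h1 := ((hVu x).const_sub E).const_mul 2
      simpa using h1
    have hqd : HasDerivAt q (1 / (2 * Real.sqrt (2 * (E - V (uu x)))) *
        (2 * -(deriv V (uu x) * p x))) x := by
      have hsq := Real.hasDerivAt_sqrt (x := 2 * (E - V (uu x))) (by positivity)
      exact hsq.comp x hinner
    set σ : ℝ := if 0 < p x then 1 else -1 with hσ
    have hev : (fun y => σ * q y) =ᶠ[𝓝 x] p := by
      rcases lt_trichotomy (p x) 0 with hneg | hzero | hposs
      · have hσv : σ = -1 := by rw [hσ, if_neg (by linarith)]
        filter_upwards [hp_cont.continuousAt.eventually_mem (isOpen_Iio.mem_nhds hneg)]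
          with y hy
        rw [hσv, habs y, abs_of_neg hy]
        ring
      · exact absurd hzero hpx
      · have hσv : σ = 1 := by rw [hσ, if_pos hposs]
        filter_upwards [hp_cont.continuousAt.eventually_mem (isOpen_Ioi.mem_nhds hposs)]
          with y hy
        rw [hσv, habs y, abs_of_pos hy]
        ring
    have hpd : HasDerivAt p (σ * (1 / (2 * Real.sqrt (2 * (E - V (uu x)))) *
        (2 * -(deriv V (uu x) * p x)))) x :=
      (hqd.const_mul σ).congr_of_eventuallyEq hev.symm
    set A : ℝ := σ * (1 / (2 * Real.sqrt (2 * (E - V (uu x)))) *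
        (2 * -(deriv V (uu x) * p x))) with hA
    have hE2 : HasDerivAt (fun y => (1/2 : ℝ) * p y ^ 2 + V (uu y))
        ((1/2 : ℝ) * (2 * p x ^ 1 * A) + deriv V (uu x) * p x) x := by
      exact ((hpd.pow 2).const_mul (1/2 : ℝ)).add (hVu x)
    have hconst : HasDerivAt (fun y => (1/2 : ℝ) * p y ^ 2 + V (uu y)) 0 x := by
      have hfe : (fun y => (1/2 : ℝ) * p y ^ 2 + V (uu y)) = fun _ => E := funext energy
      rw [hfe]
      exact hasDerivAt_const x E
    have heq0 : (1/2 : ℝ) * (2 * p x ^ 1 * A) + deriv V (uu x) * p x = 0 :=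
      hE2.unique hconst
    have h1 : p x * (A + deriv V (uu x)) = 0 := by linear_combination heq0
    have h2 : A = -(deriv V (uu x)) := by
      rcases mul_eq_zero.1 h1 with h | h
      · exact absurd h hpx
      · linarith
    exact h2 ▸ hpd
  have hder2 : ∀ x, HasDerivAt p (-(deriv V (uu x))) x := by
    intro x
    by_cases hx : Real.sin (θ x) * Real.cos (θ x) = 0
    · obtain ⟨k₀, hk₀⟩ := sincos_zero hx
      obtain ⟨δ, hδpos, hδ⟩ := Metric.continuousAt_iff.1 hθc.continuousAt (π/2)
        (by positivity)
      have hev : ∀ᶠ y in 𝓝[≠] x, Real.sin (θ y) * Real.cos (θ y) ≠ 0 := by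
        rw [eventually_nhdsWithin_iff]
        filter_upwards [Metric.ball_mem_nhds x hδpos] with y hy hyx
        intro hzero
        obtain ⟨k, hk⟩ := sincos_zero hzero
        have hne : θ y ≠ θ x := fun h => hyx (hθsm.injective h)
        have hkk : k ≠ k₀ := by
          rintro rfl
          exact hne (hk.trans hk₀.symm)
        have h1 : |θ y - θ x| < π/2 := by
          have := hδ hy
          rwa [Real.dist_eq] at this
        rw [hk, hk₀] at h1
        have h2 : (1:ℝ) ≤ |(k:ℝ) - (k₀:ℝ)| := by
          have hz : (1:ℤ) ≤ |k - k₀| := Int.one_le_abs (sub_ne_zero.2 hkk)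
          have : ((1:ℤ):ℝ) ≤ ((|k - k₀| : ℤ) : ℝ) := by exact_mod_cast hz
          rwa [Int.cast_abs, Int.cast_sub, Int.cast_one] at this
        have h3 : |(k:ℝ) * (π/2) - (k₀:ℝ) * (π/2)| = |(k:ℝ) - (k₀:ℝ)| * (π/2) := by
          rw [← sub_mul, abs_mul, abs_of_pos (by positivity : (0:ℝ) < π/2)]
        rw [h3] at h1
        nlinarith [Real.pi_pos]
      have hg : ContinuousAt (fun y => -(deriv V (uu y))) x :=
        ((hVderiv_cont.comp hucont).neg).continuousAt
      exact hasDerivAt_of_ne (f := p) (g := fun y => -(deriv V (uu y)))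
        (by filter_upwards [hev] with y hy; exact hDder y hy)
        hp_cont.continuousAt hg
    · exact hDder x hx
  have hu2 : ContDiff ℝ 2 uu := by
    rw [show ((2 : WithTop ℕ∞)) = 1 + 1 by norm_num, contDiff_succ_iff_deriv]
    refine ⟨fun x => (hup x).differentiableAt, by simp, ?_⟩
    rw [hud, contDiff_one_iff_deriv]
    refine ⟨fun x => (hder2 x).differentiableAt, ?_⟩
    have hdp2 : deriv p = fun x => -(deriv V (uu x)) := funext fun x => (hder2 x).deriv
    rw [hdp2]
    exact (hVderiv_cont.comp hucont).neg
  have hrange : Set.range uu = Set.Icc Um Up := by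
    apply Set.eq_of_subset_of_subset
    · rintro v ⟨x, rfl⟩
      exact c_mem hlt (θ x)
    · intro v hv
      have hne : Up - Um ≠ 0 := sub_ne_zero.2 hlt.ne'
      set t := (v - Um) / (Up - Um) with ht
      have ht0 : 0 ≤ t := div_nonneg (by linarith [hv.1]) (by linarith)
      have ht1 : t ≤ 1 := (div_le_one (by linarith)).2 (by linarith [hv.2])
      obtain ⟨x, hx⟩ := hθsurj (Real.arcsin (Real.sqrt t))
      refine ⟨x, ?_⟩
      have hsin : Real.sin (θ x) = Real.sqrt t := by
        rw [hx]
        exact Real.sin_arcsin (le_trans (by norm_num) (Real.sqrt_nonneg t))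
          (Real.sqrt_le_one.mpr ht1)
      show c Um Up (θ x) = v
      rw [c, hsin, Real.sq_sqrt ht0, ht]
      field_simp
      ring
  have hT : 2 * ((1 / Real.sqrt 2) * ∫ s in Um..Up, 1 / Real.sqrt (E - V s))
      = ∫ η in (0:ℝ)..π, (F V E Um Up η)⁻¹ := by
    rw [cov hV hlt hVm hVp hVin hdm hdp, int_F_pi hV hlt hVm hVp hVin hdm hdp]
    have h2 : Real.sqrt 2 ≠ 0 := (Real.sqrt_pos.2 (by norm_num)).ne'
    field_simp
  have hper : Function.Periodic uu
      (2 * ((1 / Real.sqrt 2) * ∫ s in Um..Up, 1 / Real.sqrt (E - V s))) := by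
    intro x
    rw [hT]
    have hstep := hθper π (F_per (V := V) (E := E) (Um := Um) (Up := Up)) x
    show c Um Up (θ (x + ∫ η in (0:ℝ)..π, (F V E Um Up η)⁻¹)) = c Um Up (θ x)
    rw [hstep]
    simp [c, Real.sin_add_pi]
  exact ⟨uu, hu2, fun x => by rw [hud]; exact (hder2 x).deriv,
    fun x => by rw [hud]; exact energy x, hrange, hper⟩

end main

end Stmt12

/-- Phase-plane existence criterion for periodic orbits.  If `V` is `C²`,
`V(U₋) = V(U₊) = E` with `U₋ < U₊`, `V < E` on `(U₋, U₊)`, and `V'(U₋) ≠ 0 ≠ V'(U₊)`,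
then `L = (1/√2)∫_{U₋}^{U₊} du/√(E − V(u))` is finite (the integrand is interval
integrable) and there is a `C²` function `u` with `u'' = −V'(u)`, energy
`(1/2)u'² + V(u) = E`, range `[U₋, U₊]`, periodic with period `2L`. -/
theorem stmt_12 (V : ℝ → ℝ) (hV : ContDiff ℝ 2 V) (E : ℝ) (Um Up : ℝ) (hlt : Um < Up)
    (hVm : V Um = E) (hVp : V Up = E) (hVin : ∀ u ∈ Set.Ioo Um Up, V u < E)
    (hdm : deriv V Um ≠ 0) (hdp : deriv V Up ≠ 0) :
    IntervalIntegrable (fun s => 1 / Real.sqrt (E - V s)) volume Um Up ∧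
    ∃ u : ℝ → ℝ, ContDiff ℝ 2 u ∧
      (∀ x, deriv (deriv u) x = -(deriv V (u x))) ∧
      (∀ x, (1 / 2) * (deriv u x) ^ 2 + V (u x) = E) ∧
      Set.range u = Set.Icc Um Up ∧
      Function.Periodic u
        (2 * ((1 / Real.sqrt 2) * ∫ s in Um..Up, 1 / Real.sqrt (E - V s))) := by
  exact Stmt12.main hV hlt hVm hVp hVin hdm hdp
end
end

section
/- Let f : ℝ → ℝ be continuously differentiable, Ω ⊆ ℝ³ open, and u : ℝ × Ω → ℝ a smooth function satisfying ∂ₓ²u = (1 − c²)u − f(u) + a for all (x, a, E, c) ∈ ℝ × Ω, and let T, M : Ω → ℝ be differentiable functions of (a, E, c). Fix (a, E, c) ∈ Ω and define φ₂(x) = det of the 3×3 matrix with rows (∂_a u(x), ∂_a T, ∂_a M), (∂_E u(x), ∂_E T, ∂_E M), (∂_c u(x), ∂_c T, ∂_c M). Then, with L₂[w] = −∂ₓ²w + (1 − c²)w − f'(u)·w, one has for all x: L₂[φ₂](x) = −det[[∂_E T, ∂_E M],[∂_c T, ∂_c M]] + 2c · det[[∂_a T, ∂_a M],[∂_E T,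 ∂_E M]] · u(x). In particular, L₂[φ₂] differs from 2c · det[[∂_a T, ∂_a M],[∂_E T, ∂_E M]] · u by a constant function. -/
open Set

noncomputable def Dv (v : ℝ × ℝ) (h : ℝ × ℝ → ℝ) : ℝ × ℝ → ℝ :=
  fun p => fderiv ℝ h p v

theorem Dv_contDiffOn {U : Set (ℝ × ℝ)} (hU : IsOpen U) {h : ℝ × ℝ → ℝ}
    (hh : ContDiffOn ℝ (⊤ : ℕ∞) h U) (v : ℝ × ℝ) :
    ContDiffOn ℝ (⊤ : ℕ∞) (Dv v h) U := by
  exact (hh.fderiv_of_isOpen hU (by norm_cast)).clm_apply contDiffOn_const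

theorem Dv_differentiableAt {U : Set (ℝ × ℝ)} (hU : IsOpen U) {h : ℝ × ℝ → ℝ}
    (hh : ContDiffOn ℝ (⊤ : ℕ∞) h U) (v : ℝ × ℝ) {p : ℝ × ℝ} (hp : p ∈ U) :
    DifferentiableAt ℝ (Dv v h) p :=
  (((Dv_contDiffOn hU hh v).differentiableOn (by norm_cast)).differentiableAt
    (hU.mem_nhds hp))

theorem deriv_slice1 {h : ℝ × ℝ → ℝ} {x s : ℝ} (hd : DifferentiableAt ℝ h (x, s)) :
    deriv (fun t => h (t, s)) x = fderiv ℝ h (x, s) (1, 0) := by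
  have h1 : HasDerivAt (fun t : ℝ => (t, s)) ((1 : ℝ), (0 : ℝ)) x :=
    (hasDerivAt_id x).prodMk (hasDerivAt_const x s)
  exact (hd.hasFDerivAt.comp_hasDerivAt x h1).deriv

theorem deriv_slice2 {h : ℝ × ℝ → ℝ} {x s : ℝ} (hd : DifferentiableAt ℝ h (x, s)) :
    deriv (fun r => h (x, r)) s = fderiv ℝ h (x, s) (0, 1) := by
  have h1 : HasDerivAt (fun r : ℝ => (x, r)) ((0 : ℝ), (1 : ℝ)) s :=
    (hasDerivAt_const s x).prodMk (hasDerivAt_id s)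
  exact (hd.hasFDerivAt.comp_hasDerivAt s h1).deriv

theorem fderiv_Dv {U : Set (ℝ × ℝ)} (hU : IsOpen U) {h : ℝ × ℝ → ℝ}
    (hh : ContDiffOn ℝ (⊤ : ℕ∞) h U) (v w : ℝ × ℝ) {p : ℝ × ℝ} (hp : p ∈ U) :
    fderiv ℝ (Dv w h) p v = fderiv ℝ (fderiv ℝ h) p v w := by
  have hd : DifferentiableAt ℝ (fderiv ℝ h) p :=
    (((hh.fderiv_of_isOpen (m := (⊤:ℕ∞)) hU (by norm_cast)).differentiableOn
      (by norm_cast)).differentiableAt (hU.mem_nhds hp))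
  have := fderiv_clm_apply (𝕜 := ℝ) hd (differentiableAt_const w)
  have h2 : fderiv ℝ (Dv w h) p = (fderiv ℝ h p).comp (fderiv ℝ (fun _ : ℝ × ℝ => w) p)
      + (fderiv ℝ (fderiv ℝ h) p).flip w := this
  rw [h2]
  simp [fderiv_const]

theorem Dv_comm {U : Set (ℝ × ℝ)} (hU : IsOpen U) {h : ℝ × ℝ → ℝ}
    (hh : ContDiffOn ℝ (⊤ : ℕ∞) h U) (v w : ℝ × ℝ) {p : ℝ × ℝ} (hp : p ∈ U) :
    Dv v (Dv w h) p = Dv w (Dv v h) p := by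
  have hsym : IsSymmSndFDerivAt ℝ h p :=
    (hh.contDiffAt (hU.mem_nhds hp)).isSymmSndFDerivAt (by rw [minSmoothness_of_isRCLikeNormedField]; exact WithTop.coe_le_coe.2 le_top)
  show fderiv ℝ (Dv w h) p v = fderiv ℝ (Dv v h) p w
  rw [fderiv_Dv hU hh v w hp, fderiv_Dv hU hh w v hp]
  exact hsym.eq v w

theorem diff_slice1 {h : ℝ × ℝ → ℝ} {x s : ℝ} (hd : DifferentiableAt ℝ h (x, s)) :
    DifferentiableAt ℝ (fun t => h (t, s)) x :=
  hd.comp x (differentiableAt_id.prodMk (differentiableAt_const s))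

theorem diff_slice2 {h : ℝ × ℝ → ℝ} {x s : ℝ} (hd : DifferentiableAt ℝ h (x, s)) :
    DifferentiableAt ℝ (fun r => h (x, r)) s :=
  hd.comp s ((differentiableAt_const x).prodMk differentiableAt_id)

theorem Dv_congr {h1 h2 : ℝ × ℝ → ℝ} {p : ℝ × ℝ} (hev : h1 =ᶠ[nhds p] h2) (v : ℝ × ℝ) :
    Dv v h1 p = Dv v h2 p := by
  unfold Dv; rw [hev.fderiv_eq]

theorem swap3 (g : ℝ → ℝ → ℝ) (ω : Set ℝ) (hω : IsOpen ω)
    (hg : ContDiffOn ℝ (⊤ : ℕ∞) (fun p : ℝ × ℝ => g p.1 p.2) (Set.univ ×ˢ ω))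
    (a : ℝ) (ha : a ∈ ω) (x : ℝ) :
    DifferentiableAt ℝ (fun s => g x s) a ∧
    DifferentiableAt ℝ (fun t => deriv (fun s => g t s) a) x ∧
    DifferentiableAt ℝ (deriv (fun t => deriv (fun s => g t s) a)) x ∧
    deriv (deriv (fun t => deriv (fun s => g t s) a)) x
      = deriv (fun s => deriv (deriv (fun t => g t s)) x) a := by
  set G : ℝ × ℝ → ℝ := fun p => g p.1 p.2 with hG
  set U : Set (ℝ × ℝ) := Set.univ ×ˢ ω with hUdef
  have hU : IsOpen U := isOpen_univ.prod hω
  have hmem : ∀ (t s : ℝ), s ∈ ω → (t, s) ∈ U := fun t s hs => ⟨trivial, hs⟩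
  have hGd : ∀ {p : ℝ × ℝ}, p ∈ U → DifferentiableAt ℝ G p := fun {p} hp =>
    ((hg.differentiableOn (by norm_cast)).differentiableAt (hU.mem_nhds hp))
  -- w = ∂₂ G (·, a)
  have hw : (fun t => deriv (fun s => g t s) a) = fun t => Dv (0,1) G (t, a) := by
    funext t
    exact deriv_slice2 (hGd (hmem t a ha))
  have hDG2 := Dv_contDiffOn hU hg ((0:ℝ),(1:ℝ))
  have hDG1 := Dv_contDiffOn hU hg ((1:ℝ),(0:ℝ))
  have hDDG1 := Dv_contDiffOn hU hDG1 ((1:ℝ),(0:ℝ))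
  -- first derivative of w
  have hw1 : deriv (fun t => deriv (fun s => g t s) a)
      = fun t => Dv (1,0) (Dv (0,1) G) (t, a) := by
    rw [hw]; funext t
    exact deriv_slice1 (Dv_differentiableAt hU hg _ (hmem t a ha))
  refine ⟨?_, ?_, ?_, ?_⟩
  · exact diff_slice2 (hGd (hmem x a ha))
  · rw [hw]; exact diff_slice1 (Dv_differentiableAt hU hg _ (hmem x a ha))
  · rw [hw1]; exact diff_slice1 (Dv_differentiableAt hU hDG2 _ (hmem x a ha))
  · -- LHS = D1 D1 D2 G (x,a)
    have hL : deriv (deriv (fun t => deriv (fun s => g t s) a)) x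
        = Dv (1,0) (Dv (1,0) (Dv (0,1) G)) (x, a) := by
      rw [hw1]
      exact deriv_slice1 (Dv_differentiableAt hU hDG2 _ (hmem x a ha))
    -- RHS = D2 D1 D1 G (x,a)
    have hR : deriv (fun s => deriv (deriv (fun t => g t s)) x) a
        = Dv (0,1) (Dv (1,0) (Dv (1,0) G)) (x, a) := by
      have hev : (fun s => deriv (deriv (fun t => g t s)) x)
          =ᶠ[nhds a] (fun s => Dv (1,0) (Dv (1,0) G) (x, s)) := by
        filter_upwards [hω.mem_nhds ha] with s hs
        have e1 : (fun t => g t s) = fun t => G (t, s) := rfl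
        have e2 : deriv (fun t => g t s) = fun t => Dv (1,0) G (t, s) := by
          rw [e1]; funext t; exact deriv_slice1 (hGd (hmem t s hs))
        rw [e2]
        exact deriv_slice1 (Dv_differentiableAt hU hg _ (hmem x s hs))
      rw [hev.deriv_eq]
      exact deriv_slice2 (Dv_differentiableAt hU hDG1 _ (hmem x a ha))
    rw [hL, hR]
    -- swap: D1 D1 D2 = D1 D2 D1 = D2 D1 D1
    have hpmem : ((x:ℝ), a) ∈ U := hmem x a ha
    have step1 : Dv (1,0) (Dv (1,0) (Dv (0,1) G)) (x, a)
        = Dv (1,0) (Dv (0,1) (Dv (1,0) G)) (x, a) := by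
      refine Dv_congr ?_ _
      filter_upwards [hU.mem_nhds hpmem] with q hq
      exact Dv_comm hU hg _ _ hq
    have step2 : Dv (1,0) (Dv (0,1) (Dv (1,0) G)) (x, a)
        = Dv (0,1) (Dv (1,0) (Dv (1,0) G)) (x, a) :=
      Dv_comm hU hDG1 _ _ hpmem
    rw [step1, step2]



/-- The determinant identity behind the geometric lemma.  With
`u(·; a, E, c)` a smooth family of profile solutions, `T`, `M` differentiable
functions of `(a, E, c)`, and
`φ₂(x) = det [[∂ₐu(x), ∂ₐT, ∂ₐM], [∂_Eu(x), ∂_ET, ∂_EM], [∂_cu(x), ∂_cT, ∂_cM]]`,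
the Hill operator `L₂[w] = −∂ₓ²w + (1 − c²)w − f'(u)w` satisfies
`L₂[φ₂] = −det[[T_E, M_E],[T_c, M_c]] + 2c·det[[T_a, M_a],[T_E, M_E]]·u`; in
particular `L₂[φ₂]` differs from `2c·det[[T_a, M_a],[T_E, M_E]]·u` by a constant. -/
theorem stmt_16 (f : ℝ → ℝ) (hf : ContDiff ℝ 1 f)
    (Ω : Set (ℝ × ℝ × ℝ)) (hΩ : IsOpen Ω)
    (u : ℝ → ℝ → ℝ → ℝ → ℝ)
    (hsmooth : ContDiffOn ℝ (⊤ : ℕ∞)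
      (fun q : ℝ × ℝ × ℝ × ℝ => u q.1 q.2.1 q.2.2.1 q.2.2.2) (Set.univ ×ˢ Ω))
    (hODE : ∀ x a E c, (a, E, c) ∈ Ω →
      deriv (deriv (fun s => u s a E c)) x = (1 - c ^ 2) * u x a E c - f (u x a E c) + a)
    (T M : ℝ × ℝ × ℝ → ℝ)
    (hT : DifferentiableOn ℝ T Ω) (hM : DifferentiableOn ℝ M Ω)
    (a E c : ℝ) (hmem : (a, E, c) ∈ Ω)
    (ua uE uc : ℝ → ℝ)
    (hua : ua = fun x => deriv (fun s => u x s E c) a)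
    (huE : uE = fun x => deriv (fun s => u x a s c) E)
    (huc : uc = fun x => deriv (fun s => u x a E s) c)
    (Ta TE Tc Ma ME Mc : ℝ)
    (hTa : Ta = deriv (fun s => T (s, E, c)) a) (hMa : Ma = deriv (fun s => M (s, E, c)) a)
    (hTE : TE = deriv (fun s => T (a, s, c)) E) (hME : ME = deriv (fun s => M (a, s, c)) E)
    (hTc : Tc = deriv (fun s => T (a, E, s)) c) (hMc : Mc = deriv (fun s => M (a, E, s)) c)
    (φ₂ : ℝ → ℝ)
    (hφ₂ : ∀ x, φ₂ x = Matrix.det !![ua x, Ta, Ma; uE x, TE, ME; uc x, Tc, Mc])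
    (L2 : (ℝ → ℝ) → ℝ → ℝ)
    (hL2 : ∀ w x, L2 w x
      = -(deriv (deriv w) x) + (1 - c ^ 2) * w x - deriv f (u x a E c) * w x) :
    (∀ x, L2 φ₂ x
      = -(Matrix.det !![TE, ME; Tc, Mc])
        + 2 * c * Matrix.det !![Ta, Ma; TE, ME] * u x a E c) ∧
    (∃ k : ℝ, ∀ x,
      L2 φ₂ x - 2 * c * Matrix.det !![Ta, Ma; TE, ME] * u x a E c = k) := by
  have hfa : ∀ y : ℝ, HasDerivAt f (deriv f y) y :=
    fun y => (hf.differentiable one_ne_zero y).hasDerivAt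
  -- parameter-a family
  have hωa : IsOpen {s : ℝ | (s, E, c) ∈ Ω} :=
    hΩ.preimage (by fun_prop : Continuous fun s : ℝ => ((s, E, c) : ℝ × ℝ × ℝ))
  have hsa : ContDiffOn ℝ (⊤ : ℕ∞) (fun p : ℝ × ℝ => u p.1 p.2 E c)
      (Set.univ ×ˢ {s : ℝ | (s, E, c) ∈ Ω}) := by
    have hmap : ContDiff ℝ (⊤ : ℕ∞)
        (fun p : ℝ × ℝ => ((p.1, p.2, E, c) : ℝ × ℝ × ℝ × ℝ)) := by fun_prop
    exact hsmooth.comp hmap.contDiffOn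
      (fun p hp => ⟨trivial, (Set.mem_prod.1 hp).2⟩)
  have Sa := fun x => swap3 (fun x s => u x s E c) _ hωa hsa a hmem x
  -- parameter-E family
  have hωE : IsOpen {s : ℝ | (a, s, c) ∈ Ω} :=
    hΩ.preimage (by fun_prop : Continuous fun s : ℝ => ((a, s, c) : ℝ × ℝ × ℝ))
  have hsE : ContDiffOn ℝ (⊤ : ℕ∞) (fun p : ℝ × ℝ => u p.1 a p.2 c)
      (Set.univ ×ˢ {s : ℝ | (a, s, c) ∈ Ω}) := by
    have hmap : ContDiff ℝ (⊤ : ℕ∞)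
        (fun p : ℝ × ℝ => ((p.1, a, p.2, c) : ℝ × ℝ × ℝ × ℝ)) := by fun_prop
    exact hsmooth.comp hmap.contDiffOn
      (fun p hp => ⟨trivial, (Set.mem_prod.1 hp).2⟩)
  have SE := fun x => swap3 (fun x s => u x a s c) _ hωE hsE E hmem x
  -- parameter-c family
  have hωc : IsOpen {s : ℝ | (a, E, s) ∈ Ω} :=
    hΩ.preimage (by fun_prop : Continuous fun s : ℝ => ((a, E, s) : ℝ × ℝ × ℝ))
  have hsc : ContDiffOn ℝ (⊤ : ℕ∞) (fun p : ℝ × ℝ => u p.1 a E p.2)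
      (Set.univ ×ˢ {s : ℝ | (a, E, s) ∈ Ω}) := by
    have hmap : ContDiff ℝ (⊤ : ℕ∞)
        (fun p : ℝ × ℝ => ((p.1, a, E, p.2) : ℝ × ℝ × ℝ × ℝ)) := by fun_prop
    exact hsmooth.comp hmap.contDiffOn
      (fun p hp => ⟨trivial, (Set.mem_prod.1 hp).2⟩)
  have Sc := fun x => swap3 (fun x s => u x a E s) _ hωc hsc c hmem x
  -- differentiability of ua, uE, uc and their derivatives
  have hdiffa : ∀ x, DifferentiableAt ℝ ua x := by
    intro x; rw [hua]; exact (Sa x).2.1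
  have hdiffa' : ∀ x, DifferentiableAt ℝ (deriv ua) x := by
    intro x; rw [hua]; exact (Sa x).2.2.1
  have hdiffE : ∀ x, DifferentiableAt ℝ uE x := by
    intro x; rw [huE]; exact (SE x).2.1
  have hdiffE' : ∀ x, DifferentiableAt ℝ (deriv uE) x := by
    intro x; rw [huE]; exact (SE x).2.2.1
  have hdiffc : ∀ x, DifferentiableAt ℝ uc x := by
    intro x; rw [huc]; exact (Sc x).2.1
  have hdiffc' : ∀ x, DifferentiableAt ℝ (deriv uc) x := by
    intro x; rw [huc]; exact (Sc x).2.2.1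
  -- the three gradient equations
  have keyA : ∀ x, deriv (deriv ua) x
      = (1 - c ^ 2) * ua x - deriv f (u x a E c) * ua x + 1 := by
    intro x
    simp only [hua]
    have hDa : HasDerivAt (fun s => u x s E c) (deriv (fun s => u x s E c) a) a :=
      ((Sa x).1).hasDerivAt
    rw [(Sa x).2.2.2]
    have hev : (fun s => deriv (deriv (fun t => u t s E c)) x)
        =ᶠ[nhds a] (fun s => (1 - c ^ 2) * u x s E c - f (u x s E c) + s) := by
      filter_upwards [hωa.mem_nhds hmem] with s hs
      exact hODE x s E c hs
    rw [hev.deriv_eq]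
    have h1 : HasDerivAt (fun s => (1 - c ^ 2) * u x s E c - f (u x s E c) + s)
        ((1 - c ^ 2) * deriv (fun s => u x s E c) a
          - deriv f (u x a E c) * deriv (fun s => u x s E c) a + 1) a :=
      ((hDa.const_mul (1 - c ^ 2)).sub
        ((hfa (u x a E c)).comp a hDa)).add (hasDerivAt_id a)
    exact h1.deriv
  have keyE : ∀ x, deriv (deriv uE) x
      = (1 - c ^ 2) * uE x - deriv f (u x a E c) * uE x := by
    intro x
    simp only [huE]
    have hDE : HasDerivAt (fun s => u x a s c) (deriv (fun s => u x a s c) E) E :=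
      ((SE x).1).hasDerivAt
    rw [(SE x).2.2.2]
    have hev : (fun s => deriv (deriv (fun t => u t a s c)) x)
        =ᶠ[nhds E] (fun s => (1 - c ^ 2) * u x a s c - f (u x a s c) + a) := by
      filter_upwards [hωE.mem_nhds hmem] with s hs
      exact hODE x a s c hs
    rw [hev.deriv_eq]
    have h1 : HasDerivAt (fun s => (1 - c ^ 2) * u x a s c - f (u x a s c) + a)
        ((1 - c ^ 2) * deriv (fun s => u x a s c) E
          - deriv f (u x a E c) * deriv (fun s => u x a s c) E) E :=
      ((hDE.const_mul (1 - c ^ 2)).sub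
        ((hfa (u x a E c)).comp E hDE)).add_const a
    exact h1.deriv
  have keyC : ∀ x, deriv (deriv uc) x
      = -(2 * c) * u x a E c + (1 - c ^ 2) * uc x - deriv f (u x a E c) * uc x := by
    intro x
    simp only [huc]
    have hDc : HasDerivAt (fun s => u x a E s) (deriv (fun s => u x a E s) c) c :=
      ((Sc x).1).hasDerivAt
    rw [(Sc x).2.2.2]
    have hev : (fun s => deriv (deriv (fun t => u t a E s)) x)
        =ᶠ[nhds c] (fun s => (1 - s ^ 2) * u x a E s - f (u x a E s) + a) := by
      filter_upwards [hωc.mem_nhds hmem] with s hs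
      exact hODE x a E s hs
    rw [hev.deriv_eq]
    have hpow : HasDerivAt (fun s : ℝ => 1 - s ^ 2) (0 - (2 : ℕ) * c ^ 1) c :=
      (hasDerivAt_const c (1 : ℝ)).sub (hasDerivAt_pow 2 c)
    have h1 : HasDerivAt (fun s => (1 - s ^ 2) * u x a E s - f (u x a E s) + a)
        ((0 - (2 : ℕ) * c ^ 1) * u x a E c
            + (1 - c ^ 2) * deriv (fun s => u x a E s) c
          - deriv f (u x a E c) * deriv (fun s => u x a E s) c) c :=
      ((hpow.mul hDc).sub ((hfa (u x a E c)).comp c hDc)).add_const a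
    rw [h1.deriv]
    push_cast
    ring
  -- φ₂ as a linear combination
  have hφ' : ∀ x, φ₂ x = (TE * Mc - Tc * ME) * ua x
      + (Tc * Ma - Ta * Mc) * uE x + (Ta * ME - TE * Ma) * uc x := by
    intro x
    rw [hφ₂ x]
    simp [Matrix.det_fin_three]
    ring
  have hφfun : φ₂ = fun x => (TE * Mc - Tc * ME) * ua x
      + (Tc * Ma - Ta * Mc) * uE x + (Ta * ME - TE * Ma) * uc x := funext hφ'
  have hd1 : deriv φ₂ = fun x => (TE * Mc - Tc * ME) * deriv ua x
      + (Tc * Ma - Ta * Mc) * deriv uE x + (Ta * ME - TE * Ma) * deriv uc x := by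
    funext x
    rw [hφfun]
    exact ((((hdiffa x).hasDerivAt.const_mul (TE * Mc - Tc * ME)).add
      ((hdiffE x).hasDerivAt.const_mul (Tc * Ma - Ta * Mc))).add
      ((hdiffc x).hasDerivAt.const_mul (Ta * ME - TE * Ma))).deriv
  have hd2 : ∀ x, deriv (deriv φ₂) x = (TE * Mc - Tc * ME) * deriv (deriv ua) x
      + (Tc * Ma - Ta * Mc) * deriv (deriv uE) x
      + (Ta * ME - TE * Ma) * deriv (deriv uc) x := by
    intro x
    rw [hd1]
    exact ((((hdiffa' x).hasDerivAt.const_mul (TE * Mc - Tc * ME)).add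
      ((hdiffE' x).hasDerivAt.const_mul (Tc * Ma - Ta * Mc))).add
      ((hdiffc' x).hasDerivAt.const_mul (Ta * ME - TE * Ma))).deriv
  have main : ∀ x, L2 φ₂ x
      = -(Matrix.det !![TE, ME; Tc, Mc])
        + 2 * c * Matrix.det !![Ta, Ma; TE, ME] * u x a E c := by
    intro x
    rw [hL2 φ₂ x, hd2 x, keyA x, keyE x, keyC x, hφ' x,
      Matrix.det_fin_two_of, Matrix.det_fin_two_of]
    ring
  exact ⟨main, ⟨-(Matrix.det !![TE, ME; Tc, Mc]), fun x => by rw [main x]; ring⟩⟩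
end
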